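/- arXiv:2301.00605 — 3 statements merged into one kernel-verified Lean document; each statement's English description precedes it below -/
import Mathlib

section
/- Let U be a Banach space and K : U → U a bounded linear operator such that K² is compact. Then the operator I − K is Fredholm of index zero. -/
/-- A bounded linear operator is Fredholm of index zero: finite-dimensional kernel,
closed range, and the cokernel is finite-dimensional of the same dimension as the kernel. -/
def IsFredholmIndexZero {U V : Type*} [NormedAddCommGroup U] [NormedSpace ℝ U]
    [NormedAddCommGroup V] [NormedSpace ℝ V] (T : U →L[ℝ] V) : Prop :=
  FiniteDimensional ℝ (LinearMap.ker (T : U →ₗ[ℝ] V)) ∧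
  IsClosed (LinearMap.range (T : U →ₗ[ℝ] V) : Set V) ∧
  FiniteDimensional ℝ (V ⧸ LinearMap.range (T : U →ₗ[ℝ] V)) ∧
  Module.finrank ℝ (V ⧸ LinearMap.range (T : U →ₗ[ℝ] V)) = Module.finrank ℝ (LinearMap.ker (T : U →ₗ[ℝ] V))

set_option linter.unusedSectionVars false

section NikolskiiAux

open ContinuousLinearMap Submodule Module Metric

variable {U : Type*} [NormedAddCommGroup U] [NormedSpace ℝ U] [CompleteSpace U]

lemma nik_sep (C : U →L[ℝ] U) (hC : IsCompactOperator (C : U → U)) (x : ℕ → U)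
    (hx : ∀ n, ‖x n‖ ≤ 1) (hsep : ∀ m n, m < n → 1/2 ≤ ‖C (x n) - C (x m)‖) : False := by
  have hC' : IsCompactOperator ((C : U →ₗ[ℝ] U) : U → U) := by simpa using hC
  have hcpt : IsCompact (closure <| (C : U →ₗ[ℝ] U) '' closedBall 0 1) :=
    hC'.isCompact_closure_image_closedBall (𝕜₁ := ℝ) 1
  have hmem : ∀ n, C (x n) ∈ closure ((C : U →ₗ[ℝ] U) '' closedBall 0 1) := fun n =>
    subset_closure ⟨x n, by simpa using hx n, rfl⟩
  obtain ⟨a, -, φ, hφ, hlim⟩ := hcpt.tendsto_subseq hmem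
  have hcau := hlim.cauchySeq
  rw [Metric.cauchySeq_iff] at hcau
  obtain ⟨N, hN⟩ := hcau (1/2) (by norm_num)
  have h1 := hN (N + 1) (by omega) N (by omega)
  have h2 := hsep (φ N) (φ (N + 1)) (hφ (by omega))
  simp only [Function.comp_apply, dist_eq_norm] at h1
  linarith

lemma nik_riesz {F G : Submodule ℝ U} (hFG : F ≤ G) (hFc : IsClosed (F : Set U)) (hne : F ≠ G) :
    ∃ x : U, x ∈ G ∧ ‖x‖ = 1 ∧ ∀ y ∈ F, 1/2 ≤ ‖x - y‖ := by
  set F' : Submodule ℝ G := F.comap G.subtype with hF'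
  have hF'c : IsClosed (F' : Set G) := hFc.preimage continuous_subtype_val
  have hex : ∃ v : G, v ∉ F' := by
    obtain ⟨g, hgG, hgF⟩ : ∃ g, g ∈ G ∧ g ∉ F := by
      by_contra h
      push_neg at h
      exact hne (le_antisymm hFG fun g hg => h g hg)
    exact ⟨⟨g, hgG⟩, hgF⟩
  obtain ⟨x₀, hx₀F, hx₀⟩ := riesz_lemma hF'c hex (show (1/2 : ℝ) < 1 by norm_num)
  have hx₀ne : (x₀ : U) ≠ 0 := by
    intro h
    apply hx₀F
    have : x₀ = 0 := Subtype.ext h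
    simp [this, hF']
  refine ⟨‖(x₀ : U)‖⁻¹ • (x₀ : U), G.smul_mem _ x₀.2, ?_, ?_⟩
  · simp [norm_smul, inv_mul_cancel₀ (norm_ne_zero_iff.mpr hx₀ne)]
  · intro y hy
    have hyG : y ∈ G := hFG hy
    have hmem : (⟨‖(x₀ : U)‖ • y, G.smul_mem _ hyG⟩ : G) ∈ F' := by
      simpa [hF'] using F.smul_mem ‖(x₀ : U)‖ hy
    have := hx₀ _ hmem
    have hpos : 0 < ‖(x₀ : U)‖ := norm_pos_iff.mpr hx₀ne
    have hnorm : ‖x₀ - (⟨‖(x₀ : U)‖ • y, G.smul_mem _ hyG⟩ : G)‖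
        = ‖(x₀ : U) - ‖(x₀ : U)‖ • y‖ := rfl
    rw [hnorm] at this
    have key : ‖‖(x₀ : U)‖⁻¹ • (x₀ : U) - y‖ = ‖(x₀ : U)‖⁻¹ * ‖(x₀ : U) - ‖(x₀ : U)‖ • y‖ := by
      have : ‖(x₀ : U)‖⁻¹ • ((x₀ : U) - ‖(x₀ : U)‖ • y) = ‖(x₀ : U)‖⁻¹ • (x₀ : U) - y := by
        rw [smul_sub, smul_smul, inv_mul_cancel₀ (ne_of_gt hpos), one_smul]
      rw [← this, norm_smul, Real.norm_of_nonneg (le_of_lt (inv_pos.mpr hpos))]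
    rw [key]
    calc (1:ℝ)/2 = ‖(x₀ : U)‖⁻¹ * ((1/2) * ‖(x₀:U)‖) := by field_simp
      _ ≤ ‖(x₀ : U)‖⁻¹ * ‖(x₀ : U) - ‖(x₀ : U)‖ • y‖ :=
          mul_le_mul_of_nonneg_left this (le_of_lt (inv_pos.mpr hpos))

lemma nik_ker (L : U →L[ℝ] U) (h : IsCompactOperator ((L ∘L L : U →L[ℝ] U) : U → U)) :
    FiniteDimensional ℝ (LinearMap.ker ((1 - L : U →L[ℝ] U) : U →ₗ[ℝ] U)) := by
  set N := LinearMap.ker ((1 - L : U →L[ℝ] U) : U →ₗ[ℝ] U) with hN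
  have hfix : ∀ x ∈ N, L x = x := by
    intro x hx
    have h0 : (1 - L) x = 0 := hx
    have : x - L x = 0 := by simpa using h0
    exact (sub_eq_zero.mp this).symm
  have h' : IsCompactOperator (((L ∘L L : U →L[ℝ] U) : U →ₗ[ℝ] U) : U → U) := h
  have hS : IsCompact (closure <| ((L ∘L L : U →L[ℝ] U) : U →ₗ[ℝ] U) '' Metric.closedBall 0 1) :=
    h'.isCompact_closure_image_closedBall (𝕜₁ := ℝ) 1
  have hsub : (N : Set U) ∩ Metric.closedBall 0 1 ⊆
      closure (((L ∘L L : U →L[ℝ] U) : U →ₗ[ℝ] U) '' Metric.closedBall 0 1) := by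
    rintro x ⟨hxN, hxB⟩
    apply subset_closure
    refine ⟨x, hxB, ?_⟩
    simp [hfix x hxN]
  have hclosed : IsClosed ((N : Set U) ∩ Metric.closedBall 0 1) :=
    (ContinuousLinearMap.isClosed_ker (1 - L)).inter Metric.isClosed_closedBall
  have hcompact : IsCompact ((N : Set U) ∩ Metric.closedBall 0 1) :=
    hS.of_isClosed_subset hclosed hsub
  have himg : (Subtype.val '' (Metric.closedBall (0 : N) 1)) =
      (N : Set U) ∩ Metric.closedBall 0 1 := by
    ext x
    constructor
    · rintro ⟨⟨y, hy⟩, hyB, rfl⟩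
      refine ⟨hy, ?_⟩
      simpa [Metric.mem_closedBall, dist_eq_norm] using hyB
    · rintro ⟨hxN, hxB⟩
      exact ⟨⟨x, hxN⟩, by simpa [Metric.mem_closedBall, dist_eq_norm] using hxB, rfl⟩
  have : IsCompact (Metric.closedBall (0 : N) 1) := by
    rw [Subtype.isCompact_iff, himg]
    exact hcompact
  exact FiniteDimensional.of_isCompact_closedBall₀ ℝ zero_lt_one this

lemma nik_range (L : U →L[ℝ] U) (h : IsCompactOperator ((L ∘L L : U →L[ℝ] U) : U → U)) :
    IsClosed (LinearMap.range ((1 - L : U →L[ℝ] U) : U →ₗ[ℝ] U) : Set U) := by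
  set S : U →L[ℝ] U := 1 - L with hS
  haveI hker : FiniteDimensional ℝ (LinearMap.ker ((S : U →L[ℝ] U) : U →ₗ[ℝ] U)) := nik_ker L h
  obtain ⟨π, hπ⟩ := Submodule.ClosedComplemented.of_finiteDimensional (LinearMap.ker ((S : U →L[ℝ] U) : U →ₗ[ℝ] U))
  set M : Submodule ℝ U := LinearMap.ker (((LinearMap.ker ((S : U →L[ℝ] U) : U →ₗ[ℝ] U)).subtypeL ∘L π : U →L[ℝ] U) : U →ₗ[ℝ] U) with hM
  have hMc : IsClosed (M : Set U) := ContinuousLinearMap.isClosed_ker _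
  haveI : CompleteSpace M := hMc.completeSpace_coe
  have hdecomp : ∀ x : U, x - (π x : U) ∈ M := by
    intro x
    have : π (x - (π x : U)) = 0 := by
      rw [map_sub, hπ (π x), sub_self]
    simpa [hM, ContinuousLinearMap.comp_apply, this] using congrArg ((LinearMap.ker ((S : U →L[ℝ] U) : U →ₗ[ℝ] U)).subtypeL) this
  have hdisj : ∀ x : U, x ∈ LinearMap.ker ((S : U →L[ℝ] U) : U →ₗ[ℝ] U) → x ∈ M → x = 0 := by
    intro x hx hxM
    have h1 : ((LinearMap.ker ((S : U →L[ℝ] U) : U →ₗ[ℝ] U)).subtypeL ∘L π) x = 0 := hxM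
    have h2 : π x = ⟨x, hx⟩ := hπ ⟨x, hx⟩
    rw [ContinuousLinearMap.comp_apply, h2] at h1
    simpa using h1
  -- bounded below on M
  have hbound : ∃ c : ℝ, 0 < c ∧ ∀ x ∈ M, ‖x‖ ≤ c * ‖S x‖ := by
    by_contra hc
    push_neg at hc
    have hseq : ∀ n : ℕ, ∃ x : U, x ∈ M ∧ ‖x‖ = 1 ∧ ‖S x‖ < 1/(n+1) := by
      intro n
      obtain ⟨x, hxM, hx⟩ := hc (n+1) (by positivity)
      have hx0 : x ≠ 0 := by
        intro h0; rw [h0] at hx; simp at hx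
      have hnpos : (0:ℝ) < ‖x‖ := norm_pos_iff.mpr hx0
      refine ⟨‖x‖⁻¹ • x, M.smul_mem _ hxM, ?_, ?_⟩
      · simp [norm_smul, inv_mul_cancel₀ (ne_of_gt hnpos)]
      · rw [map_smul, norm_smul, Real.norm_of_nonneg (inv_nonneg.mpr hnpos.le)]
        rw [inv_mul_lt_iff₀ hnpos]
        calc ‖S x‖ = ((n:ℝ)+1)⁻¹ * (((n:ℝ)+1) * ‖S x‖) := by field_simp
          _ < ((n:ℝ)+1)⁻¹ * ‖x‖ := by
              apply mul_lt_mul_of_pos_left hx (by positivity)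
          _ = ‖x‖ * (1/((n:ℝ)+1)) := by ring
    choose u huM hu1 huS using hseq
    have huSlim : Filter.Tendsto (fun n => S (u n)) Filter.atTop (nhds 0) := by
      rw [tendsto_iff_norm_sub_tendsto_zero]
      apply squeeze_zero (g := fun n : ℕ => 1/((n:ℝ)+1)) (fun n => norm_nonneg _)
        (fun n => by rw [sub_zero]; exact (huS n).le)
      exact tendsto_one_div_add_atTop_nhds_zero_nat
    -- compactness
    have h' : IsCompactOperator (((L ∘L L : U →L[ℝ] U) : U →ₗ[ℝ] U) : U → U) := h
    have hcpt : IsCompact (closure <| ((L ∘L L : U →L[ℝ] U) : U →ₗ[ℝ] U) '' Metric.closedBall 0 1) :=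
      h'.isCompact_closure_image_closedBall (𝕜₁ := ℝ) 1
    have hmem : ∀ n, (L ∘L L) (u n) ∈
        closure (((L ∘L L : U →L[ℝ] U) : U →ₗ[ℝ] U) '' Metric.closedBall 0 1) := fun n =>
      subset_closure ⟨u n, by simp [Metric.mem_closedBall, dist_eq_norm, (hu1 n).le], rfl⟩
    obtain ⟨a, -, φ, hφ, hlim⟩ := hcpt.tendsto_subseq hmem
    have hulim : Filter.Tendsto (fun n => u (φ n)) Filter.atTop (nhds a) := by
      have hrepr : ∀ n : ℕ, u (φ n) = S (u (φ n)) + L (S (u (φ n))) + (L ∘L L) (u (φ n)) := by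
        intro n
        have : ∀ v : U, S v + L (S v) + (L ∘L L) v = v := by
          intro v
          simp only [hS, ContinuousLinearMap.sub_apply, ContinuousLinearMap.one_apply,
            ContinuousLinearMap.comp_apply, map_sub]
          abel
        exact (this (u (φ n))).symm
      have hSφ : Filter.Tendsto (fun n => S (u (φ n))) Filter.atTop (nhds 0) :=
        huSlim.comp hφ.tendsto_atTop
      have hLSφ : Filter.Tendsto (fun n => L (S (u (φ n)))) Filter.atTop (nhds 0) := by
        have := (L.continuous.tendsto 0).comp hSφ
        simpa [Function.comp_def] using this
      have := (hSφ.add hLSφ).add hlim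
      simp only [zero_add, add_zero] at this
      apply this.congr
      intro n
      exact (hrepr n).symm
    have haM : a ∈ M := hMc.mem_of_tendsto hulim (Filter.Eventually.of_forall fun n => huM _)
    have haK : a ∈ LinearMap.ker ((S : U →L[ℝ] U) : U →ₗ[ℝ] U) := by
      have h1 : Filter.Tendsto (fun n => S (u (φ n))) Filter.atTop (nhds (S a)) :=
        (S.continuous.tendsto a).comp hulim
      have h2 : Filter.Tendsto (fun n => S (u (φ n))) Filter.atTop (nhds 0) :=
        huSlim.comp hφ.tendsto_atTop
      exact LinearMap.mem_ker.mpr (tendsto_nhds_unique h1 h2)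
    have ha1 : ‖a‖ = 1 := by
      have := ((continuous_norm.tendsto a).comp hulim)
      have h2 : Filter.Tendsto (fun n => ‖u (φ n)‖) Filter.atTop (nhds 1) := by
        apply Filter.Tendsto.congr (f₁ := fun _ => (1:ℝ))
        · intro n; exact (hu1 _).symm
        · exact tendsto_const_nhds
      have := tendsto_nhds_unique this h2
      simpa using this
    rw [hdisj a haK haM] at ha1
    simp at ha1
  obtain ⟨c, hc0, hc⟩ := hbound
  set f : M →L[ℝ] U := S.comp M.subtypeL with hf
  have hanti : AntilipschitzWith c.toNNReal f := by
    apply AddMonoidHomClass.antilipschitz_of_bound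
    intro x
    rw [Real.coe_toNNReal c hc0.le]
    exact hc x x.2
  have hclosed : IsClosed (Set.range f) := hanti.isClosed_range f.uniformContinuous
  have heq : (LinearMap.range ((S : U →L[ℝ] U) : U →ₗ[ℝ] U) : Set U) = Set.range f := by
    ext y
    constructor
    · rintro ⟨x, rfl⟩
      refine ⟨⟨x - (π x : U), hdecomp x⟩, ?_⟩
      have : S (π x : U) = 0 := (π x).2
      simp [hf, map_sub, this]
    · rintro ⟨⟨x, hx⟩, rfl⟩
      exact ⟨x, rfl⟩
  rw [heq]
  exact hclosed

lemma nik_pow (K : U →L[ℝ] U) (hK2 : IsCompactOperator ((K ∘L K : U →L[ℝ] U) : U → U)) (k : ℕ) :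
    IsCompactOperator (((1 - (1 - K)^k) ∘L (1 - (1 - K)^k) : U →L[ℝ] U) : U → U) := by
  set S : U →L[ℝ] U := ∑ i ∈ Finset.range k, (1 - K)^i with hSdef
  have hone : (1 : U →L[ℝ] U) - K - 1 = -K := by abel
  have h1 : S * K = 1 - (1 - K)^k := by
    have h' : S * ((1 : U →L[ℝ] U) - K - 1) = (1 - K)^k - 1 := geom_sum_mul (1 - K) k
    rw [hone, mul_neg] at h'
    have := congrArg Neg.neg h'
    simpa [neg_sub] using this
  have h2 : K * S = 1 - (1 - K)^k := by
    have h' : ((1 : U →L[ℝ] U) - K - 1) * S = (1 - K)^k - 1 := mul_geom_sum (1 - K) k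
    rw [hone, neg_mul] at h'
    have := congrArg Neg.neg h'
    simpa [neg_sub] using this
  have hop : ((1 - (1 - K)^k) ∘L (1 - (1 - K)^k) : U →L[ℝ] U)
      = S ∘L ((K ∘L K) ∘L S) := by
    show (1 - (1 - K)^k) * (1 - (1 - K)^k) = S * (K * K * S)
    calc (1 - (1 - K)^k) * (1 - (1 - K)^k) = (S * K) * (K * S) := by rw [h1, h2]
      _ = S * (K * K * S) := by rw [mul_assoc, mul_assoc]
  rw [hop]
  have hA := hK2.comp_clm (S : U →L[ℝ] U)
  have hB := hA.continuous_comp S.continuous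
  have : (((S ∘L ((K ∘L K) ∘L S)) : U →L[ℝ] U) : U → U) = ⇑S ∘ (⇑(K ∘L K) ∘ ⇑S) := by
    ext x; simp
  rw [this]
  exact hB

-- pointwise power lemmas
lemma nik_pow_apply (T : U →L[ℝ] U) (n : ℕ) (v : U) : (T^(n+1)) v = (T^n) (T v) := by
  rw [pow_succ]; rfl

lemma nik_pow_apply' (T : U →L[ℝ] U) (n : ℕ) (v : U) : (T^(n+1)) v = T ((T^n) v) := by
  rw [pow_succ']; rfl

lemma nik_ker_mono (T : U →L[ℝ] U) : Monotone (fun k => LinearMap.ker ((T^k : U →L[ℝ] U) : U →ₗ[ℝ] U)) := by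
  apply monotone_nat_of_le_succ
  intro k x hx
  have hx' : (T^k) x = 0 := hx
  show (T^(k+1)) x = 0
  rw [nik_pow_apply', hx', map_zero]

lemma nik_range_anti (T : U →L[ℝ] U) : Antitone (fun k => LinearMap.range ((T^k : U →L[ℝ] U) : U →ₗ[ℝ] U)) := by
  apply antitone_nat_of_succ_le
  intro k y hy
  obtain ⟨x, rfl⟩ := hy
  exact ⟨T x, (nik_pow_apply T k x).symm⟩

lemma nik_ker_eventual (T : U →L[ℝ] U) {n : ℕ}
    (h : LinearMap.ker ((T^(n+1) : U →L[ℝ] U) : U →ₗ[ℝ] U) = LinearMap.ker ((T^n : U →L[ℝ] U) : U →ₗ[ℝ] U)) :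
    ∀ m, n ≤ m → LinearMap.ker ((T^m : U →L[ℝ] U) : U →ₗ[ℝ] U) = LinearMap.ker ((T^n : U →L[ℝ] U) : U →ₗ[ℝ] U) := by
  have key : ∀ m, n ≤ m → LinearMap.ker ((T^(m+1) : U →L[ℝ] U) : U →ₗ[ℝ] U) ≤ LinearMap.ker ((T^m : U →L[ℝ] U) : U →ₗ[ℝ] U) := by
    intro m hm
    induction m, hm using Nat.le_induction with
    | base => exact h.le
    | succ m hm ih =>
        intro x hx
        have hx' : (T^(m+2)) x = 0 := hx
        have hTx : T x ∈ LinearMap.ker ((T^(m+1) : U →L[ℝ] U) : U →ₗ[ℝ] U) := by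
          show (T^(m+1)) (T x) = 0
          rw [← nik_pow_apply]
          exact hx'
        have : T x ∈ LinearMap.ker ((T^m : U →L[ℝ] U) : U →ₗ[ℝ] U) := ih hTx
        show (T^(m+1)) x = 0
        rw [nik_pow_apply]
        exact this
  intro m hm
  induction m, hm using Nat.le_induction with
  | base => rfl
  | succ m hm ih => exact le_antisymm (ih ▸ key m hm) (ih ▸ nik_ker_mono T (Nat.le_succ m))

lemma nik_range_eventual (T : U →L[ℝ] U) {n : ℕ}
    (h : LinearMap.range ((T^(n+1) : U →L[ℝ] U) : U →ₗ[ℝ] U) = LinearMap.range ((T^n : U →L[ℝ] U) : U →ₗ[ℝ] U)) :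
    ∀ m, n ≤ m → LinearMap.range ((T^m : U →L[ℝ] U) : U →ₗ[ℝ] U) = LinearMap.range ((T^n : U →L[ℝ] U) : U →ₗ[ℝ] U) := by
  have key : ∀ m, n ≤ m → LinearMap.range ((T^m : U →L[ℝ] U) : U →ₗ[ℝ] U) ≤ LinearMap.range ((T^(m+1) : U →L[ℝ] U) : U →ₗ[ℝ] U) := by
    intro m hm
    induction m, hm using Nat.le_induction with
    | base => exact h.ge
    | succ m hm ih =>
        rintro y ⟨u, rfl⟩
        have : (T^m) u ∈ LinearMap.range ((T^(m+1) : U →L[ℝ] U) : U →ₗ[ℝ] U) := ih ⟨u, rfl⟩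
        obtain ⟨w, hw⟩ := this
        refine ⟨w, ?_⟩
        show (T^(m+1+1)) w = (T^(m+1)) u
        rw [nik_pow_apply' T (m+1) w, show (T^(m+1)) w = (T^m) u from hw, ← nik_pow_apply']
  intro m hm
  induction m, hm using Nat.le_induction with
  | base => rfl
  | succ m hm ih =>
      exact le_antisymm (ih ▸ nik_range_anti T (Nat.le_succ m)) (ih ▸ key m hm)

lemma nik_C_apply (K : U →L[ℝ] U) (v : U) :
    (K ∘L K) v = v - (((1-K) v) + ((1-K) v) - (1-K) ((1-K) v)) := by
  simp only [ContinuousLinearMap.comp_apply, ContinuousLinearMap.sub_apply,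
    ContinuousLinearMap.one_apply, map_sub]
  abel

lemma nik_ker_pow_fd (K : U →L[ℝ] U) (hK2 : IsCompactOperator ((K ∘L K : U →L[ℝ] U) : U → U))
    (k : ℕ) : FiniteDimensional ℝ (LinearMap.ker (((1-K)^k : U →L[ℝ] U) : U →ₗ[ℝ] U)) := by
  have := nik_ker (1 - (1-K)^k) (nik_pow K hK2 k)
  have he : (1 : U →L[ℝ] U) - (1 - (1-K)^k) = (1-K)^k := by abel
  rwa [he] at this

lemma nik_range_pow_closed (K : U →L[ℝ] U)
    (hK2 : IsCompactOperator ((K ∘L K : U →L[ℝ] U) : U → U)) (k : ℕ) :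
    IsClosed ((LinearMap.range (((1-K)^k : U →L[ℝ] U) : U →ₗ[ℝ] U)) : Set U) := by
  have := nik_range (1 - (1-K)^k) (nik_pow K hK2 k)
  have he : (1 : U →L[ℝ] U) - (1 - (1-K)^k) = (1-K)^k := by abel
  rwa [he] at this

lemma nik_ker_stab (K : U →L[ℝ] U) (hK2 : IsCompactOperator ((K ∘L K : U →L[ℝ] U) : U → U)) :
    ∃ n : ℕ, LinearMap.ker (((1-K)^(n+1) : U →L[ℝ] U) : U →ₗ[ℝ] U) = LinearMap.ker (((1-K)^n : U →L[ℝ] U) : U →ₗ[ℝ] U) := by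
  by_contra hne
  push_neg at hne
  set T : U →L[ℝ] U := 1 - K with hT
  have hsel : ∀ n : ℕ, ∃ x : U, x ∈ LinearMap.ker ((T^(n+1) : U →L[ℝ] U) : U →ₗ[ℝ] U) ∧ ‖x‖ = 1 ∧
      ∀ y ∈ LinearMap.ker ((T^n : U →L[ℝ] U) : U →ₗ[ℝ] U), 1/2 ≤ ‖x - y‖ := by
    intro n
    exact nik_riesz (nik_ker_mono T (Nat.le_succ n)) (ContinuousLinearMap.isClosed_ker _)
      (fun h => hne n (by rw [h]))
  choose x hxk hx1 hxd using hsel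
  refine nik_sep (K ∘L K) hK2 x (fun n => (hx1 n).le) ?_
  intro m n hmn
  have key : ∀ (k : ℕ) (v : U), v ∈ LinearMap.ker ((T^(k+1) : U →L[ℝ] U) : U →ₗ[ℝ] U) →
      T v + T v - T (T v) ∈ LinearMap.ker ((T^k : U →L[ℝ] U) : U →ₗ[ℝ] U) := by
    intro k v hv
    have h1 : T v ∈ LinearMap.ker ((T^k : U →L[ℝ] U) : U →ₗ[ℝ] U) := by
      show (T^k) (T v) = 0
      rw [← nik_pow_apply]
      exact hv
    have h2 : T (T v) ∈ LinearMap.ker ((T^k : U →L[ℝ] U) : U →ₗ[ℝ] U) := by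
      show (T^k) (T (T v)) = 0
      rw [← nik_pow_apply, ← nik_pow_apply]
      exact nik_ker_mono T (Nat.le_succ (k+1)) hv
    exact sub_mem (add_mem h1 h1) h2
  have hyn : (T (x n) + T (x n) - T (T (x n))) + x m - (T (x m) + T (x m) - T (T (x m)))
      ∈ LinearMap.ker ((T^n : U →L[ℝ] U) : U →ₗ[ℝ] U) := by
    refine sub_mem (add_mem (key n _ (hxk n)) ?_) ?_
    · exact nik_ker_mono T hmn (hxk m)
    · exact nik_ker_mono T (le_of_lt hmn) (key m _ (hxk m))
  have hd := hxd n _ hyn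
  have heq : (K ∘L K) (x n) - (K ∘L K) (x m)
      = x n - ((T (x n) + T (x n) - T (T (x n))) + x m - (T (x m) + T (x m) - T (T (x m)))) := by
    rw [nik_C_apply, nik_C_apply, ← hT]
    abel
  rw [heq]
  exact hd

lemma nik_range_stab (K : U →L[ℝ] U) (hK2 : IsCompactOperator ((K ∘L K : U →L[ℝ] U) : U → U)) :
    ∃ n : ℕ, LinearMap.range (((1-K)^(n+1) : U →L[ℝ] U) : U →ₗ[ℝ] U) = LinearMap.range (((1-K)^n : U →L[ℝ] U) : U →ₗ[ℝ] U) := by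
  by_contra hne
  push_neg at hne
  set T : U →L[ℝ] U := 1 - K with hT
  have hsel : ∀ n : ℕ, ∃ x : U, x ∈ LinearMap.range ((T^n : U →L[ℝ] U) : U →ₗ[ℝ] U) ∧ ‖x‖ = 1 ∧
      ∀ y ∈ LinearMap.range ((T^(n+1) : U →L[ℝ] U) : U →ₗ[ℝ] U), 1/2 ≤ ‖x - y‖ := by
    intro n
    exact nik_riesz (nik_range_anti T (Nat.le_succ n)) (nik_range_pow_closed K hK2 (n+1))
      (fun h => hne n h)
  choose x hxr hx1 hxd using hsel
  refine nik_sep (K ∘L K) hK2 x (fun n => (hx1 n).le) ?_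
  intro m n hmn
  have key2 : ∀ (k : ℕ) (v : U), v ∈ LinearMap.range ((T^k : U →L[ℝ] U) : U →ₗ[ℝ] U) → T v ∈ LinearMap.range ((T^(k+1) : U →L[ℝ] U) : U →ₗ[ℝ] U) := by
    rintro k v ⟨u, rfl⟩
    exact ⟨u, nik_pow_apply' T k u⟩
  have key : ∀ (k : ℕ) (v : U), v ∈ LinearMap.range ((T^k : U →L[ℝ] U) : U →ₗ[ℝ] U) →
      T v + T v - T (T v) ∈ LinearMap.range ((T^(k+1) : U →L[ℝ] U) : U →ₗ[ℝ] U) := by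
    intro k v hv
    have h1 := key2 k v hv
    have h2 := key2 (k+1) _ h1
    exact sub_mem (add_mem h1 h1) (nik_range_anti T (Nat.le_succ (k+1)) h2)
  have hym : (T (x m) + T (x m) - T (T (x m))) + x n - (T (x n) + T (x n) - T (T (x n)))
      ∈ LinearMap.range ((T^(m+1) : U →L[ℝ] U) : U →ₗ[ℝ] U) := by
    refine sub_mem (add_mem (key m _ (hxr m)) ?_) ?_
    · exact nik_range_anti T hmn (hxr n)
    · exact nik_range_anti T (by omega : m + 1 ≤ n + 1) (key n _ (hxr n))
  have hd := hxd m _ hym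
  have heq : (K ∘L K) (x m) - (K ∘L K) (x n)
      = x m - ((T (x m) + T (x m) - T (T (x m))) + x n - (T (x n) + T (x n) - T (T (x n)))) := by
    rw [nik_C_apply, nik_C_apply, ← hT]
    abel
  rw [norm_sub_rev, heq]
  exact hd

theorem nikolskii_fredholm' (K : U →L[ℝ] U) (hK2 : IsCompactOperator ((K ∘L K : U →L[ℝ] U) : U → U)) :
    IsFredholmIndexZero (ContinuousLinearMap.id ℝ U - K) := by
  have hTid : ContinuousLinearMap.id ℝ U - K = 1 - K := rfl
  rw [hTid]
  set T : U →L[ℝ] U := 1 - K with hTdef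
  obtain ⟨n₀, hn₀⟩ := nik_ker_stab K hK2
  obtain ⟨m₀, hm₀⟩ := nik_range_stab K hK2
  have hkerEv := nik_ker_eventual T hn₀
  have hranEv := nik_range_eventual T hm₀
  set p := max n₀ m₀ + 1 with hp
  have hp1 : 1 ≤ p := by omega
  have hkerp : LinearMap.ker ((T^(2*p) : U →L[ℝ] U) : U →ₗ[ℝ] U) = LinearMap.ker ((T^p : U →L[ℝ] U) : U →ₗ[ℝ] U) := by
    rw [hkerEv (2*p) (by omega), hkerEv p (by omega)]
  have hranp : LinearMap.range ((T^(2*p) : U →L[ℝ] U) : U →ₗ[ℝ] U) = LinearMap.range ((T^p : U →L[ℝ] U) : U →ₗ[ℝ] U) := by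
    rw [hranEv (2*p) (by omega), hranEv p (by omega)]
  set N : Submodule ℝ U := LinearMap.ker ((T^p : U →L[ℝ] U) : U →ₗ[ℝ] U) with hN
  set R : Submodule ℝ U := LinearMap.range ((T^p : U →L[ℝ] U) : U →ₗ[ℝ] U) with hR
  haveI hNfd : FiniteDimensional ℝ N := nik_ker_pow_fd K hK2 p
  have hTT : ∀ z : U, (T^(2*p)) z = (T^p) ((T^p) z) := by
    intro z
    rw [two_mul, pow_add]
    rfl
  have hdisj : N ⊓ R = ⊥ := by
    rw [eq_bot_iff]
    rintro x ⟨hxN, u, rfl⟩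
    have hu : u ∈ LinearMap.ker ((T^(2*p) : U →L[ℝ] U) : U →ₗ[ℝ] U) := by
      show (T^(2*p)) u = 0
      rw [hTT]
      exact hxN
    rw [hkerp] at hu
    show (T^p) u ∈ (⊥ : Submodule ℝ U)
    rw [Submodule.mem_bot]
    exact hu
  have hsum : N ⊔ R = ⊤ := by
    rw [eq_top_iff]
    intro x _
    have hx : (T^p) x ∈ LinearMap.range ((T^(2*p) : U →L[ℝ] U) : U →ₗ[ℝ] U) := by
      rw [hranp]; exact ⟨x, rfl⟩
    obtain ⟨z, hz⟩ := hx
    have hx1 : x - (T^p) z ∈ N := by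
      show (T^p) (x - (T^p) z) = 0
      rw [map_sub, ← hTT, show (T^(2*p)) z = (T^p) x from hz, sub_self]
    have hz2 : (T^p) z ∈ R := LinearMap.mem_range_self _ z
    have := Submodule.add_mem_sup hx1 hz2
    simpa using this
  have hTN : ∀ x ∈ N, T x ∈ N := by
    intro x hx
    show (T^p) (T x) = 0
    rw [← nik_pow_apply]
    exact nik_ker_mono T (Nat.le_succ p) hx
  have hkerT : LinearMap.ker ((T : U →L[ℝ] U) : U →ₗ[ℝ] U) ≤ N := by
    intro x hx
    have h1 : x ∈ LinearMap.ker ((T^1 : U →L[ℝ] U) : U →ₗ[ℝ] U) := by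
      show (T^1) x = 0
      rw [pow_one]
      exact hx
    exact nik_ker_mono T hp1 h1
  have hRT : R ≤ LinearMap.range ((T : U →L[ℝ] U) : U →ₗ[ℝ] U) := by
    rintro y ⟨u, rfl⟩
    obtain ⟨q, hq⟩ : ∃ q, p = q + 1 := ⟨p - 1, by omega⟩
    refine ⟨(T^q) u, ?_⟩
    show T ((T^q) u) = (T^p) u
    rw [hq]
    exact (nik_pow_apply' T q u).symm
  haveI hkerTfd : FiniteDimensional ℝ (LinearMap.ker ((T : U →L[ℝ] U) : U →ₗ[ℝ] U)) :=
    Submodule.finiteDimensional_of_le hkerT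
  have hclosed : IsClosed (LinearMap.range ((T : U →L[ℝ] U) : U →ₗ[ℝ] U) : Set U) := nik_range K hK2
  -- cokernel analysis
  set Tl : U →ₗ[ℝ] U := (T : U →ₗ[ℝ] U) with hTl
  set φ : N →ₗ[ℝ] (U ⧸ LinearMap.range ((T : U →L[ℝ] U) : U →ₗ[ℝ] U)) := (LinearMap.range ((T : U →L[ℝ] U) : U →ₗ[ℝ] U)).mkQ.comp N.subtype with hφ
  have hsurj : Function.Surjective φ := by
    intro c
    obtain ⟨x, rfl⟩ := Submodule.mkQ_surjective _ c
    have hx : x ∈ N ⊔ R := hsum ▸ Submodule.mem_top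
    obtain ⟨a, ha, b, hb, rfl⟩ := Submodule.mem_sup.mp hx
    refine ⟨⟨a, ha⟩, ?_⟩
    show (LinearMap.range ((T : U →L[ℝ] U) : U →ₗ[ℝ] U)).mkQ a = (LinearMap.range ((T : U →L[ℝ] U) : U →ₗ[ℝ] U)).mkQ (a + b)
    rw [Submodule.mkQ_apply, Submodule.mkQ_apply, Submodule.Quotient.eq]
    simpa [hTl] using Submodule.neg_mem _ (hRT hb)
  have e := φ.quotKerEquivOfSurjective hsurj
  haveI : FiniteDimensional ℝ (N ⧸ LinearMap.ker φ) := inferInstance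
  haveI hcofd : FiniteDimensional ℝ (U ⧸ LinearMap.range ((T : U →L[ℝ] U) : U →ₗ[ℝ] U)) :=
    Module.Finite.equiv e
  refine ⟨hkerTfd, hclosed, hcofd, ?_⟩
  -- dimension count
  have hkerφ : LinearMap.ker φ = Submodule.comap N.subtype (N ⊓ LinearMap.range ((T : U →L[ℝ] U) : U →ₗ[ℝ] U)) := by
    rw [hφ, LinearMap.ker_comp, Submodule.ker_mkQ, Submodule.comap_inf,
      Submodule.comap_subtype_self, top_inf_eq]
  have hinv : ∀ x ∈ N, Tl x ∈ N := hTN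
  set ψ : N →ₗ[ℝ] N := Tl.restrict hinv with hψ
  have hNio : N ⊓ LinearMap.range ((T : U →L[ℝ] U) : U →ₗ[ℝ] U) = Submodule.map Tl N := by
    apply le_antisymm
    · rintro x ⟨hxN, u, rfl⟩
      have hu : u ∈ N ⊔ R := hsum ▸ Submodule.mem_top
      obtain ⟨a, ha, b, hb, rfl⟩ := Submodule.mem_sup.mp hu
      have hTb : T b ∈ R := by
        obtain ⟨w, rfl⟩ := hb
        exact ⟨T w, by show (T^p) (T w) = T ((T^p) w); rw [← nik_pow_apply, nik_pow_apply']⟩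
      have hTa : T a ∈ N := hTN a ha
      have hmem : T (a + b) - T a ∈ N ⊓ R := by
        constructor
        · exact Submodule.sub_mem _ hxN hTa
        · rw [map_add]
          simpa using hTb
      rw [hdisj] at hmem
      have heq0 : T (a + b) = T a := by
        have h0 := (Submodule.mem_bot ℝ).mp hmem
        exact sub_eq_zero.mp h0
      refine ⟨a, ha, ?_⟩
      show Tl a = T (a + b)
      have hTla : Tl a = T a := rfl
      rw [hTla, heq0]
    · rintro x ⟨a, ha, rfl⟩
      exact ⟨hTN a ha, ⟨a, rfl⟩⟩
  have hrankker : Module.finrank ℝ (LinearMap.ker φ) = Module.finrank ℝ (Submodule.map Tl N) := by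
    rw [hkerφ, hNio]
    exact LinearEquiv.finrank_eq (Submodule.comapSubtypeEquivOfLe
      (by rw [← hNio]; exact inf_le_left))
  have hrangeψ : Submodule.map N.subtype (LinearMap.range ψ) = Submodule.map Tl N := by
    apply le_antisymm
    · rintro x ⟨y, ⟨v, rfl⟩, rfl⟩
      exact ⟨v, v.2, rfl⟩
    · rintro x ⟨a, ha, rfl⟩
      exact ⟨ψ ⟨a, ha⟩, ⟨⟨a, ha⟩, rfl⟩, rfl⟩
  have hrankrange : Module.finrank ℝ (LinearMap.range ψ) = Module.finrank ℝ (Submodule.map Tl N) := by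
    rw [← hrangeψ]
    exact (Submodule.finrank_map_subtype_eq N (LinearMap.range ψ)).symm
  have hrn : Module.finrank ℝ (LinearMap.range ψ) + Module.finrank ℝ (LinearMap.ker ψ)
      = Module.finrank ℝ N := LinearMap.finrank_range_add_finrank_ker ψ
  have hkerψ : Module.finrank ℝ (LinearMap.ker ψ) = Module.finrank ℝ (LinearMap.ker ((T : U →L[ℝ] U) : U →ₗ[ℝ] U)) := by
    rw [hψ, LinearMap.ker_restrict hinv]
    exact LinearEquiv.finrank_eq (Submodule.comapSubtypeEquivOfLe hkerT)
  have hq : Module.finrank ℝ (N ⧸ LinearMap.ker φ) + Module.finrank ℝ (LinearMap.ker φ)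
      = Module.finrank ℝ N := Submodule.finrank_quotient_add_finrank _
  have hcoker : Module.finrank ℝ (U ⧸ LinearMap.range ((T : U →L[ℝ] U) : U →ₗ[ℝ] U))
      = Module.finrank ℝ (N ⧸ LinearMap.ker φ) := (LinearEquiv.finrank_eq e).symm
  rw [hcoker]
  omega

end NikolskiiAux

/-- Nikolskii's criterion: if `K` is a bounded operator on a Banach space `U` such that
`K ∘ K` is compact, then `I - K` is Fredholm of index zero. -/
theorem nikolskii_fredholm {U : Type*} [NormedAddCommGroup U] [NormedSpace ℝ U]
    [CompleteSpace U] (K : U →L[ℝ] U) (hK2 : IsCompactOperator (K ∘L K)) :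
    IsFredholmIndexZero (ContinuousLinearMap.id ℝ U - K) := by
  exact nikolskii_fredholm' K hK2
end

section
/- Let d : ℝ×[0,1]³ → ℝ be continuous and 1-periodic in its first argument, and let η̂ : ℝ×[0,1]³ → ℝ be C¹ with ∂_y η̂(t,x,y,z) ≠ 0 for all arguments. Then the linear operator K defined by (Kv)(t,x) = ∫_0^x ∫_0^z d(t,x,y,z) v(η̂(t,x,y,z), z) dy dz is a compact operator from the Banach space of continuous functions on ℝ×[0,1] that are 1-periodic in t (with sup norm) into itself. -/
open Set Function Filter intervalIntegral

private lemma injective_of_hasDerivAt_ne_zero {f f' : ℝ → ℝ}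
    (hd : ∀ y, HasDerivAt f (f' y) y) (hc : Continuous f') (h0 : ∀ y, f' y ≠ 0) :
    Function.Injective f := by
  have hder : ∀ y, deriv f y = f' y := fun y => (hd y).deriv
  have hsign : (∀ y, 0 < f' y) ∨ ∀ y, f' y < 0 := by
    rcases lt_or_gt_of_ne (h0 0) with h | h
    · refine Or.inr fun y => ?_
      by_contra hy
      push_neg at hy
      have hy' : 0 < f' y := lt_of_le_of_ne hy (Ne.symm (h0 y))
      have hmem : (0 : ℝ) ∈ uIcc (f' 0) (f' y) := Set.mem_uIcc.2 (Or.inl ⟨h.le, hy'.le⟩)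
      obtain ⟨c, -, hc0⟩ := intermediate_value_uIcc (a := (0:ℝ)) (b := y) hc.continuousOn hmem
      exact h0 c hc0
    · refine Or.inl fun y => ?_
      by_contra hy
      push_neg at hy
      have hy' : f' y < 0 := lt_of_le_of_ne hy (h0 y)
      have hmem : (0 : ℝ) ∈ uIcc (f' 0) (f' y) := Set.mem_uIcc.2 (Or.inr ⟨hy'.le, h.le⟩)
      obtain ⟨c, -, hc0⟩ := intermediate_value_uIcc (a := (0:ℝ)) (b := y) hc.continuousOn hmem
      exact h0 c hc0
  rcases hsign with h | h
  · exact (strictMono_of_deriv_pos fun y => by rw [hder]; exact h y).injective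
  · exact (strictAnti_of_deriv_neg fun y => by rw [hder]; exact h y).injective

set_option maxHeartbeats 2000000 in
/-- Compactness (in the Arzelà–Ascoli sense) of the integral operator
`(Kv)(t,x) = ∫₀ˣ ∫₀ᶻ d(t,x,y,z) v(η̂(t,x,y,z), z) dy dz` on the space of continuous
functions on `ℝ × [0,1]` that are `1`-periodic in `t` (with the sup norm): every bounded
sequence `vₙ` in that space has a subsequence such that `K vₙ` converges uniformly on
`ℝ × [0,1]` to an element of the space. -/
theorem integral_operator_compact
    (d : ℝ → ℝ → ℝ → ℝ → ℝ) (η : ℝ → ℝ → ℝ → ℝ → ℝ)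
    (hd : Continuous fun p : ℝ × ℝ × ℝ × ℝ => d p.1 p.2.1 p.2.2.1 p.2.2.2)
    (hdper : ∀ t x y z, d (t + 1) x y z = d t x y z)
    (hη : ContDiff ℝ 1 fun p : ℝ × ℝ × ℝ × ℝ => η p.1 p.2.1 p.2.2.1 p.2.2.2)
    (hηy : ∀ t x y z, deriv (fun y' => η t x y' z) y ≠ 0)
    (hηper : ∀ t x y z, η (t + 1) x y z = η t x y z + 1) :
    ∀ v : ℕ → ℝ → ℝ → ℝ,
      (∀ n, Continuous (uncurry (v n))) →
      (∀ n t x, v n (t + 1) x = v n t x) →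
      (∃ M, ∀ n t, ∀ x ∈ Icc (0:ℝ) 1, |v n t x| ≤ M) →
      ∃ (φ : ℕ → ℕ) (w : ℝ → ℝ → ℝ), StrictMono φ ∧
        Continuous (uncurry w) ∧ (∀ t x, w (t + 1) x = w t x) ∧
        TendstoUniformlyOn
          (fun n (p : ℝ × ℝ) =>
            ∫ z in (0:ℝ)..p.2, ∫ y in (0:ℝ)..z, d p.1 p.2 y z * v (φ n) (η p.1 p.2 y z) z)
          (uncurry w) atTop (univ ×ˢ Icc 0 1) := by
  intro v hvc hvper hvb
  obtain ⟨M, hM⟩ := hvb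
  have hM0 : 0 ≤ M := le_trans (abs_nonneg _) (hM 0 0 0 ⟨le_refl 0, zero_le_one⟩)
  -- the full map `E`
  set E : ℝ × ℝ × ℝ × ℝ → ℝ := fun p => η p.1 p.2.1 p.2.2.1 p.2.2.2 with hEdef
  have hEc : Continuous E := hη.continuous
  -- the partial derivative in `y`
  have hDD : ∀ t x y z : ℝ,
      HasDerivAt (fun y' => η t x y' z) ((fderiv ℝ E (t, x, y, z)) (0, 0, 1, 0)) y := by
    intro t x y z
    have hc : HasDerivAt (fun y' : ℝ => ((t, x, y', z) : ℝ × ℝ × ℝ × ℝ)) (0, 0, 1, 0) y :=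
      (hasDerivAt_const y t).prodMk ((hasDerivAt_const y x).prodMk
        ((hasDerivAt_id y).prodMk (hasDerivAt_const y z)))
    have hE : HasFDerivAt E (fderiv ℝ E (t, x, y, z)) (t, x, y, z) :=
      ((hη.differentiable one_ne_zero) (t, x, y, z)).hasFDerivAt
    exact hE.comp_hasDerivAt y hc
  set D : ℝ × ℝ × ℝ × ℝ → ℝ := fun p => (fderiv ℝ E p) (0, 0, 1, 0) with hDdef
  have hDc : Continuous D := (hη.continuous_fderiv one_ne_zero).clm_apply continuous_const
  have hDeq : ∀ t x y z : ℝ, HasDerivAt (fun y' => η t x y' z) (D (t, x, y, z)) y :=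
    fun t x y z => hDD t x y z
  have hD0 : ∀ p : ℝ × ℝ × ℝ × ℝ, D p ≠ 0 := by
    rintro ⟨t, x, y, z⟩
    have : deriv (fun y' => η t x y' z) y = D (t, x, y, z) := (hDeq t x y z).deriv
    rw [← this]
    exact hηy t x y z
  have hinj : ∀ t x z, Function.Injective fun y => η t x y z := by
    intro t x z
    exact injective_of_hasDerivAt_ne_zero (f' := fun y => D (t, x, y, z))
      (fun y => hDeq t x y z)
      (hDc.comp (continuous_const.prodMk (continuous_const.prodMk
        (continuous_id.prodMk continuous_const))))
      (fun y => hD0 (t, x, y, z))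
  -- the compact box
  set Q : Set (ℝ × ℝ × ℝ × ℝ) := Icc (0:ℝ) 1 ×ˢ Icc (0:ℝ) 1 ×ˢ Icc (0:ℝ) 1 ×ˢ Icc (0:ℝ) 1
    with hQdef
  have hQ : IsCompact Q :=
    isCompact_Icc.prod (isCompact_Icc.prod (isCompact_Icc.prod isCompact_Icc))
  -- the substitution map and the transformed kernel Ψ
  set Θ : ℝ × ℝ × ℝ × ℝ → ℝ × ℝ × ℝ × ℝ := fun p => (p.1, p.2.1, E p, p.2.2.2) with hΘdef
  have hΘc : Continuous Θ :=
    continuous_fst.prodMk ((continuous_fst.comp continuous_snd).prodMk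
      (hEc.prodMk (continuous_snd.comp (continuous_snd.comp continuous_snd))))
  have hΘinj : Function.Injective Θ := by
    rintro ⟨t, x, y, z⟩ ⟨t', x', y', z'⟩ h
    simp only [hΘdef, Prod.mk.injEq] at h
    obtain ⟨h1, h2, h3, h4⟩ := h
    subst h1; subst h2; subst h4
    have : y = y' := hinj t x z h3
    simp [this]
  obtain ⟨Ψ, hΨc, hΨeq⟩ : ∃ Ψ : ℝ × ℝ × ℝ × ℝ → ℝ, Continuous Ψ ∧
      ∀ p ∈ Q, Ψ (Θ p) * D p = d p.1 p.2.1 p.2.2.1 p.2.2.2 := by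
    haveI : CompactSpace Q := isCompact_iff_compactSpace.mp hQ
    let e : Q ≃ (Θ '' Q) := Equiv.Set.image Θ Q hΘinj
    have hec : Continuous e := Continuous.subtype_mk (hΘc.comp continuous_subtype_val) _
    let h : Q ≃ₜ (Θ '' Q) := Continuous.homeoOfEquivCompactToT2 (f := e) hec
    have hdD : Continuous fun q : Q => d q.1.1 q.1.2.1 q.1.2.2.1 q.1.2.2.2 / D q.1 :=
      (hd.comp continuous_subtype_val).div (hDc.comp continuous_subtype_val) fun q => hD0 q.1
    have hψ₀c : Continuous fun s : Θ '' Q =>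
        (fun q : Q => d q.1.1 q.1.2.1 q.1.2.2.1 q.1.2.2.2 / D q.1) (h.symm s) :=
      hdD.comp h.symm.continuous
    obtain ⟨Ψ₁, hΨ₁⟩ := ContinuousMap.exists_restrict_eq
      (Y := ℝ) ((hQ.image hΘc).isClosed) ⟨_, hψ₀c⟩
    refine ⟨Ψ₁, Ψ₁.continuous, ?_⟩
    intro p hp
    have h1 : Ψ₁ (Θ p) = (fun q : Q => d q.1.1 q.1.2.1 q.1.2.2.1 q.1.2.2.2 / D q.1)
        (h.symm ⟨Θ p, mem_image_of_mem Θ hp⟩) :=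
      congrFun (congrArg DFunLike.coe hΨ₁) ⟨Θ p, mem_image_of_mem Θ hp⟩
    have h2 : h.symm ⟨Θ p, mem_image_of_mem Θ hp⟩ = ⟨p, hp⟩ := by
      have : (⟨Θ p, mem_image_of_mem Θ hp⟩ : Θ '' Q) = h ⟨p, hp⟩ := rfl
      rw [this, Homeomorph.symm_apply_apply]
    rw [h1, h2]
    exact div_mul_cancel₀ _ (hD0 p)
  -- the substitution identity
  have key : ∀ (n : ℕ) (t x z : ℝ), t ∈ Icc (0:ℝ) 1 → x ∈ Icc (0:ℝ) 1 → z ∈ Icc (0:ℝ) 1 →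
      (∫ y in (0:ℝ)..z, d t x y z * v n (η t x y z) z) =
        ∫ u in (η t x 0 z)..(η t x z z), Ψ (t, x, u, z) * v n u z := by
    intro n t x z ht hx hz
    have hvcz : Continuous fun u => v n u z :=
      (hvc n).comp (continuous_id.prodMk continuous_const)
    have hgc : Continuous fun u => Ψ (t, x, u, z) * v n u z := by
      refine Continuous.mul ?_ hvcz
      exact hΨc.comp (continuous_const.prodMk (continuous_const.prodMk
        (continuous_id.prodMk continuous_const)))
    have hder : ∀ y ∈ uIcc (0:ℝ) z,
        HasDerivAt (fun y' => η t x y' z) (D (t, x, y, z)) y := fun y _ => hDeq t x y z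
    have hcontD : ContinuousOn (fun y => D (t, x, y, z)) (uIcc (0:ℝ) z) :=
      (hDc.comp (continuous_const.prodMk (continuous_const.prodMk
        (continuous_id.prodMk continuous_const)))).continuousOn
    have hsub := integral_comp_smul_deriv hder hcontD hgc
    rw [← hsub]
    refine intervalIntegral.integral_congr fun y hy => ?_
    have huIcc : uIcc (0:ℝ) z = Icc 0 z := uIcc_of_le hz.1
    rw [huIcc] at hy
    have hyI : y ∈ Icc (0:ℝ) 1 := ⟨hy.1, le_trans hy.2 hz.2⟩
    have hpQ : ((t, x, y, z) : ℝ × ℝ × ℝ × ℝ) ∈ Q := ⟨ht, hx, hyI, hz⟩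
    have hkey := hΨeq _ hpQ
    simp only [smul_eq_mul, comp]
    calc d t x y z * v n (η t x y z) z
        = (Ψ (t, x, η t x y z, z) * D (t, x, y, z)) * v n (η t x y z) z := by
          rw [hkey]
      _ = D (t, x, y, z) * (Ψ (t, x, η t x y z, z) * v n (η t x y z) z) := by ring
  -- constants
  have h0Q : ((0:ℝ), (0:ℝ), (0:ℝ), (0:ℝ)) ∈ Q := by
    refine ⟨?_, ?_, ?_, ?_⟩ <;> exact ⟨le_refl 0, zero_le_one⟩
  obtain ⟨Cd, hCd⟩ := hQ.exists_bound_of_continuousOn hd.continuousOn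
  have hCd0 : 0 ≤ Cd := le_trans (norm_nonneg _) (hCd _ h0Q)
  obtain ⟨Bη, hBη⟩ := hQ.exists_bound_of_continuousOn hEc.continuousOn
  have hBη0 : 0 ≤ Bη := le_trans (norm_nonneg _) (hBη _ h0Q)
  set J : Set ℝ := Icc (-Bη) Bη with hJdef
  set Q' : Set (ℝ × ℝ × ℝ × ℝ) := Icc (0:ℝ) 1 ×ˢ Icc (0:ℝ) 1 ×ˢ J ×ˢ Icc (0:ℝ) 1 with hQ'def
  have hQ' : IsCompact Q' :=
    isCompact_Icc.prod (isCompact_Icc.prod (isCompact_Icc.prod isCompact_Icc))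
  obtain ⟨CΨ, hCΨ⟩ := hQ'.exists_bound_of_continuousOn hΨc.continuousOn
  have h0Q' : ((0:ℝ), (0:ℝ), (0:ℝ), (0:ℝ)) ∈ Q' := by
    refine ⟨⟨le_refl 0, zero_le_one⟩, ⟨le_refl 0, zero_le_one⟩, ?_, ⟨le_refl 0, zero_le_one⟩⟩
    exact ⟨neg_nonpos.mpr hBη0, hBη0⟩
  have hCΨ0 : 0 ≤ CΨ := le_trans (norm_nonneg _) (hCΨ _ h0Q')
  have hηJ : ∀ t x y z : ℝ, t ∈ Icc (0:ℝ) 1 → x ∈ Icc (0:ℝ) 1 → y ∈ Icc (0:ℝ) 1 →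
      z ∈ Icc (0:ℝ) 1 → η t x y z ∈ J := by
    intro t x y z ht hx hy hz
    have h := hBη (t, x, y, z) ⟨ht, hx, hy, hz⟩
    rw [Real.norm_eq_abs] at h
    rw [hJdef, mem_Icc]
    exact abs_le.mp h
  -- uniform continuity moduli
  have hUΨ := hQ'.uniformContinuousOn_of_continuous hΨc.continuousOn
  rw [Metric.uniformContinuousOn_iff] at hUΨ
  have hUE := hQ.uniformContinuousOn_of_continuous hEc.continuousOn
  rw [Metric.uniformContinuousOn_iff] at hUE
  -- distance of 4-tuples differing in the first two coordinates
  have hdist4 : ∀ (t x t' x' u z δ : ℝ), 0 < δ → dist t t' < δ → dist x x' < δ →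
      dist ((t, x, u, z) : ℝ × ℝ × ℝ × ℝ) (t', x', u, z) < δ := by
    intro t x t' x' u z δ hδ h1 h2
    simp only [Prod.dist_eq, dist_self, max_self]
    exact max_lt h1 (max_lt h2 hδ)
  -- continuity of the inner integral as a function of ((t, x), z)
  have hinnerc : ∀ n, Continuous fun q : (ℝ × ℝ) × ℝ =>
      ∫ y in (0:ℝ)..q.2, d q.1.1 q.1.2 y q.2 * v n (η q.1.1 q.1.2 y q.2) q.2 := by
    intro n
    have hfc : Continuous (Function.uncurry fun (q : (ℝ × ℝ) × ℝ) (y : ℝ) =>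
        d q.1.1 q.1.2 y q.2 * v n (η q.1.1 q.1.2 y q.2) q.2) := by
      have hmap : Continuous fun q : ((ℝ × ℝ) × ℝ) × ℝ =>
          ((q.1.1.1, q.1.1.2, q.2, q.1.2) : ℝ × ℝ × ℝ × ℝ) := by fun_prop
      have h1 : Continuous fun q : ((ℝ × ℝ) × ℝ) × ℝ => d q.1.1.1 q.1.1.2 q.2 q.1.2 :=
        hd.comp hmap
      have h2 : Continuous fun q : ((ℝ × ℝ) × ℝ) × ℝ => η q.1.1.1 q.1.1.2 q.2 q.1.2 :=
        hEc.comp hmap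
      exact h1.mul ((hvc n).comp (h2.prodMk (by fun_prop)))
    exact intervalIntegral.continuous_parametric_intervalIntegral_of_continuous hfc
      (by fun_prop)
  -- continuity of the double integral
  have hgc : ∀ n, Continuous fun p : ℝ × ℝ =>
      ∫ z in (0:ℝ)..p.2, ∫ y in (0:ℝ)..z, d p.1 p.2 y z * v n (η p.1 p.2 y z) z := by
    intro n
    exact intervalIntegral.continuous_parametric_intervalIntegral_of_continuous
      (f := fun (p : ℝ × ℝ) (z : ℝ) =>
        ∫ y in (0:ℝ)..z, d p.1 p.2 y z * v n (η p.1 p.2 y z) z)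
      (hinnerc n) continuous_snd
  -- bound for the inner integral
  have hinnerB : ∀ (n : ℕ) (t x z : ℝ), t ∈ Icc (0:ℝ) 1 → x ∈ Icc (0:ℝ) 1 → z ∈ Icc (0:ℝ) 1 →
      |∫ y in (0:ℝ)..z, d t x y z * v n (η t x y z) z| ≤ Cd * M := by
    intro n t x z ht hx hz
    have h1 : ∀ y ∈ uIoc (0:ℝ) z, ‖d t x y z * v n (η t x y z) z‖ ≤ Cd * M := by
      intro y hy
      rw [uIoc_of_le hz.1] at hy
      have hyI : y ∈ Icc (0:ℝ) 1 := ⟨hy.1.le, hy.2.trans hz.2⟩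
      rw [Real.norm_eq_abs, abs_mul]
      have h2 := hCd (t, x, y, z) ⟨ht, hx, hyI, hz⟩
      rw [Real.norm_eq_abs] at h2
      exact mul_le_mul h2 (hM n _ z hz) (abs_nonneg _) hCd0
    have h3 := intervalIntegral.norm_integral_le_of_norm_le_const h1
    rw [Real.norm_eq_abs] at h3
    calc |∫ y in (0:ℝ)..z, d t x y z * v n (η t x y z) z| ≤ Cd * M * |z - 0| := h3
      _ ≤ Cd * M * 1 := by
          refine mul_le_mul_of_nonneg_left ?_ (mul_nonneg hCd0 hM0)
          rw [sub_zero]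
          exact abs_le.mpr ⟨by linarith [hz.1], hz.2⟩
      _ = Cd * M := mul_one _
  -- bound for the double integral
  have hgB : ∀ (n : ℕ) (t x : ℝ), t ∈ Icc (0:ℝ) 1 → x ∈ Icc (0:ℝ) 1 →
      |∫ z in (0:ℝ)..x, ∫ y in (0:ℝ)..z, d t x y z * v n (η t x y z) z| ≤ Cd * M := by
    intro n t x ht hx
    have h1 : ∀ z ∈ uIoc (0:ℝ) x, ‖∫ y in (0:ℝ)..z, d t x y z * v n (η t x y z) z‖ ≤ Cd * M := by
      intro z hz
      rw [uIoc_of_le hx.1] at hz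
      have hzI : z ∈ Icc (0:ℝ) 1 := ⟨hz.1.le, hz.2.trans hx.2⟩
      rw [Real.norm_eq_abs]
      exact hinnerB n t x z ht hx hzI
    have h3 := intervalIntegral.norm_integral_le_of_norm_le_const h1
    rw [Real.norm_eq_abs] at h3
    calc |∫ z in (0:ℝ)..x, ∫ y in (0:ℝ)..z, d t x y z * v n (η t x y z) z|
        ≤ Cd * M * |x - 0| := h3
      _ ≤ Cd * M * 1 := by
          refine mul_le_mul_of_nonneg_left ?_ (mul_nonneg hCd0 hM0)
          rw [sub_zero]
          exact abs_le.mpr ⟨by linarith [hx.1], hx.2⟩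
      _ = Cd * M := mul_one _
  -- periodicity of the double integral
  have hgper : ∀ (n : ℕ) (t x : ℝ),
      (∫ z in (0:ℝ)..x, ∫ y in (0:ℝ)..z, d (t+1) x y z * v n (η (t+1) x y z) z) =
      ∫ z in (0:ℝ)..x, ∫ y in (0:ℝ)..z, d t x y z * v n (η t x y z) z := by
    intro n t x
    refine intervalIntegral.integral_congr fun z _ =>
      intervalIntegral.integral_congr fun y _ => ?_
    rw [hdper, hηper, hvper n]
  -- equicontinuity
  have hequi : ∀ ε > (0:ℝ), ∃ δ > (0:ℝ), ∀ (n : ℕ) (t x t' x' : ℝ),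
      t ∈ Icc (0:ℝ) 1 → x ∈ Icc (0:ℝ) 1 → t' ∈ Icc (0:ℝ) 1 → x' ∈ Icc (0:ℝ) 1 →
      |t - t'| < δ → |x - x'| < δ →
      |(∫ z in (0:ℝ)..x, ∫ y in (0:ℝ)..z, d t x y z * v n (η t x y z) z) -
        ∫ z in (0:ℝ)..x', ∫ y in (0:ℝ)..z, d t' x' y z * v n (η t' x' y z) z| ≤ ε := by
    intro ε hε
    have hM' : (0:ℝ) < M + 1 := by linarith
    have hC' : (0:ℝ) < CΨ + 1 := by linarith
    set εΨ : ℝ := ε / (4 * (M + 1) * (2 * Bη + 1)) with hεΨdef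
    have hεΨ0 : 0 < εΨ := div_pos hε (mul_pos (mul_pos (by norm_num) hM') (by linarith))
    obtain ⟨δ₁, hδ₁0, hδ₁⟩ := hUΨ εΨ hεΨ0
    set εη : ℝ := ε / (16 * (M + 1) * (CΨ + 1)) with hεηdef
    have hεη0 : 0 < εη := div_pos hε (mul_pos (mul_pos (by norm_num) hM') hC')
    obtain ⟨δ₂, hδ₂0, hδ₂⟩ := hUE εη hεη0
    set δ₃ : ℝ := ε / (4 * (Cd * M + 1)) with hδ₃def
    have hCdM0 : (0:ℝ) ≤ Cd * M := mul_nonneg hCd0 hM0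
    have hδ₃0 : 0 < δ₃ := div_pos hε (by linarith)
    -- two arithmetic facts
    have hεηle : CΨ * M * εη ≤ ε / 16 := by
      have h1 : CΨ * M * εη ≤ (CΨ + 1) * (M + 1) * εη := by nlinarith [hεη0.le, hM0, hCΨ0]
      have h2 : (CΨ + 1) * (M + 1) * εη = ε / 16 := by
        rw [hεηdef]
        field_simp
      linarith
    have hεΨle : εΨ * M * (2 * Bη) ≤ ε / 4 := by
      have h1 : εΨ * M * (2 * Bη) ≤ εΨ * (M + 1) * (2 * Bη + 1) := by
        nlinarith [hεΨ0.le, hM0, hBη0]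
      have h2 : εΨ * (M + 1) * (2 * Bη + 1) = ε / 4 := by
        rw [hεΨdef]
        field_simp
      linarith
    refine ⟨min δ₁ (min δ₂ δ₃), lt_min hδ₁0 (lt_min hδ₂0 hδ₃0), ?_⟩
    intro n t x t' x' ht hx ht' hx' hdt hdx
    have hdt1 : |t - t'| < δ₁ := lt_of_lt_of_le hdt (min_le_left _ _)
    have hdt2 : |t - t'| < δ₂ := lt_of_lt_of_le hdt ((min_le_right _ _).trans (min_le_left _ _))
    have hdx1 : |x - x'| < δ₁ := lt_of_lt_of_le hdx (min_le_left _ _)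
    have hdx2 : |x - x'| < δ₂ := lt_of_lt_of_le hdx ((min_le_right _ _).trans (min_le_left _ _))
    have hdx3 : |x - x'| < δ₃ := lt_of_lt_of_le hdx ((min_le_right _ _).trans (min_le_right _ _))
    have h0I : (0:ℝ) ∈ Icc (0:ℝ) 1 := ⟨le_refl 0, zero_le_one⟩
    -- the difference of the inner integrals, for fixed z
    have hΔh : ∀ z ∈ Icc (0:ℝ) 1,
        |(∫ y in (0:ℝ)..z, d t x y z * v n (η t x y z) z) -
          ∫ y in (0:ℝ)..z, d t' x' y z * v n (η t' x' y z) z| ≤ ε / 2 := by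
      intro z hz
      rw [key n t x z ht hx hz, key n t' x' z ht' hx' hz]
      have haJ : η t x 0 z ∈ J := hηJ t x 0 z ht hx h0I hz
      have hbJ : η t x z z ∈ J := hηJ t x z z ht hx hz hz
      have ha'J : η t' x' 0 z ∈ J := hηJ t' x' 0 z ht' hx' h0I hz
      have hb'J : η t' x' z z ∈ J := hηJ t' x' z z ht' hx' hz hz
      set a := η t x 0 z
      set b := η t x z z
      set a' := η t' x' 0 z
      set b' := η t' x' z z
      set F : ℝ → ℝ := fun u => Ψ (t, x, u, z) * v n u z with hFdef
      set F' : ℝ → ℝ := fun u => Ψ (t', x', u, z) * v n u z with hF'def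
      have hvcz : Continuous fun u => v n u z :=
        (hvc n).comp (continuous_id.prodMk continuous_const)
      have hΨsec : ∀ t₀ x₀ : ℝ, Continuous fun u => Ψ (t₀, x₀, u, z) := fun t₀ x₀ =>
        hΨc.comp (continuous_const.prodMk (continuous_const.prodMk
          (continuous_id.prodMk continuous_const)))
      have hFc : Continuous F := (hΨsec t x).mul hvcz
      have hF'c : Continuous F' := (hΨsec t' x').mul hvcz
      -- memberships in J from interval memberships
      have hmemJ : ∀ u c c' : ℝ, c ∈ J → c' ∈ J → u ∈ uIoc c c' → u ∈ J := by
        intro u c c' hc hc' hu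
        rw [hJdef, mem_Icc] at hc hc' ⊢
        constructor
        · exact le_trans (le_min hc.1 hc'.1) hu.1.le
        · exact le_trans hu.2 (max_le hc.2 hc'.2)
      -- split the first integral
      have i1 : IntervalIntegrable F MeasureTheory.volume a a' := hFc.intervalIntegrable _ _
      have i2 : IntervalIntegrable F MeasureTheory.volume a' b' := hFc.intervalIntegrable _ _
      have i3 : IntervalIntegrable F MeasureTheory.volume b' b := hFc.intervalIntegrable _ _
      have i4 : IntervalIntegrable F' MeasureTheory.volume a' b' := hF'c.intervalIntegrable _ _
      have hsplit : (∫ u in a..b, F u) =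
          (∫ u in a..a', F u) + (∫ u in a'..b', F u) + (∫ u in b'..b, F u) := by
        rw [integral_add_adjacent_intervals i1 i2,
          integral_add_adjacent_intervals (i1.trans i2) i3]
      have hdiffeq : (∫ u in a..b, F u) - (∫ u in a'..b', F' u) =
          (∫ u in a..a', F u) + (∫ u in b'..b, F u) +
            ∫ u in a'..b', (F u - F' u) := by
        rw [intervalIntegral.integral_sub i2 i4, hsplit]
        ring
      rw [hdiffeq]
      -- bound the three pieces
      have hT1 : |∫ u in a..a', F u| ≤ ε / 16 := by
        have hb1 : ∀ u ∈ uIoc a a', ‖F u‖ ≤ CΨ * M := by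
          intro u hu
          have huJ : u ∈ J := hmemJ u a a' haJ ha'J hu
          rw [Real.norm_eq_abs, hFdef, abs_mul]
          have h2 := hCΨ (t, x, u, z) ⟨ht, hx, huJ, hz⟩
          rw [Real.norm_eq_abs] at h2
          exact mul_le_mul h2 (hM n u z hz) (abs_nonneg _) hCΨ0
        have h3 := intervalIntegral.norm_integral_le_of_norm_le_const hb1
        rw [Real.norm_eq_abs] at h3
        have h4 : |a' - a| < εη := by
          have h5 := hδ₂ (t, x, 0, z) ⟨ht, hx, h0I, hz⟩ (t', x', 0, z) ⟨ht', hx', h0I, hz⟩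
            (hdist4 t x t' x' 0 z δ₂ hδ₂0 (by rwa [Real.dist_eq]) (by rwa [Real.dist_eq]))
          rw [Real.dist_eq] at h5
          rw [abs_sub_comm]
          exact h5
        calc |∫ u in a..a', F u| ≤ CΨ * M * |a' - a| := h3
          _ ≤ CΨ * M * εη := by
              exact mul_le_mul_of_nonneg_left h4.le (mul_nonneg hCΨ0 hM0)
          _ ≤ ε / 16 := hεηle
      have hT2 : |∫ u in b'..b, F u| ≤ ε / 16 := by
        have hb1 : ∀ u ∈ uIoc b' b, ‖F u‖ ≤ CΨ * M := by
          intro u hu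
          have huJ : u ∈ J := hmemJ u b' b hb'J hbJ hu
          rw [Real.norm_eq_abs, hFdef, abs_mul]
          have h2 := hCΨ (t, x, u, z) ⟨ht, hx, huJ, hz⟩
          rw [Real.norm_eq_abs] at h2
          exact mul_le_mul h2 (hM n u z hz) (abs_nonneg _) hCΨ0
        have h3 := intervalIntegral.norm_integral_le_of_norm_le_const hb1
        rw [Real.norm_eq_abs] at h3
        have h4 : |b - b'| < εη := by
          have h5 := hδ₂ (t, x, z, z) ⟨ht, hx, hz, hz⟩ (t', x', z, z) ⟨ht', hx', hz, hz⟩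
            (hdist4 t x t' x' z z δ₂ hδ₂0 (by rwa [Real.dist_eq]) (by rwa [Real.dist_eq]))
          rw [Real.dist_eq] at h5
          exact h5
        calc |∫ u in b'..b, F u| ≤ CΨ * M * |b - b'| := h3
          _ ≤ CΨ * M * εη := mul_le_mul_of_nonneg_left h4.le (mul_nonneg hCΨ0 hM0)
          _ ≤ ε / 16 := hεηle
      have hT3 : |∫ u in a'..b', F u - F' u| ≤ ε / 4 := by
        have hb1 : ∀ u ∈ uIoc a' b', ‖F u - F' u‖ ≤ εΨ * M := by
          intro u hu
          have huJ : u ∈ J := hmemJ u a' b' ha'J hb'J hu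
          have h5 := hδ₁ (t, x, u, z) ⟨ht, hx, huJ, hz⟩ (t', x', u, z) ⟨ht', hx', huJ, hz⟩
            (hdist4 t x t' x' u z δ₁ hδ₁0 (by rwa [Real.dist_eq]) (by rwa [Real.dist_eq]))
          rw [Real.dist_eq] at h5
          have h6 : F u - F' u = (Ψ (t, x, u, z) - Ψ (t', x', u, z)) * v n u z := by
            rw [hFdef, hF'def]; ring
          rw [Real.norm_eq_abs, h6, abs_mul]
          exact mul_le_mul h5.le (hM n u z hz) (abs_nonneg _) hεΨ0.le
        have h3 := intervalIntegral.norm_integral_le_of_norm_le_const hb1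
        rw [Real.norm_eq_abs] at h3
        have h4 : |b' - a'| ≤ 2 * Bη := by
          rw [hJdef, mem_Icc] at ha'J hb'J
          have := abs_sub_abs_le_abs_sub b' a'
          have h7 : |b'| ≤ Bη := abs_le.mpr hb'J
          have h8 : |a'| ≤ Bη := abs_le.mpr ha'J
          calc |b' - a'| ≤ |b'| + |a'| := abs_sub b' a'
            _ ≤ 2 * Bη := by linarith
        calc |∫ u in a'..b', F u - F' u| ≤ εΨ * M * |b' - a'| := h3
          _ ≤ εΨ * M * (2 * Bη) :=
              mul_le_mul_of_nonneg_left h4 (mul_nonneg hεΨ0.le hM0)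
          _ ≤ ε / 4 := hεΨle
      calc |(∫ u in a..a', F u) + (∫ u in b'..b, F u) + ∫ u in a'..b', F u - F' u|
          ≤ |(∫ u in a..a', F u) + (∫ u in b'..b, F u)| + |∫ u in a'..b', F u - F' u| :=
            abs_add_le _ _
        _ ≤ |∫ u in a..a', F u| + |∫ u in b'..b, F u| + |∫ u in a'..b', F u - F' u| := by
            have := abs_add_le (∫ u in a..a', F u) (∫ u in b'..b, F u)
            linarith
        _ ≤ ε / 16 + ε / 16 + ε / 4 := by linarith
        _ ≤ ε / 2 := by linarith
    -- now the outer integral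
    have hHgen : ∀ t₀ x₀ : ℝ, Continuous fun z =>
        ∫ y in (0:ℝ)..z, d t₀ x₀ y z * v n (η t₀ x₀ y z) z := by
      intro t₀ x₀
      have hmap : Continuous fun q : ℝ × ℝ => ((t₀, x₀, q.2, q.1) : ℝ × ℝ × ℝ × ℝ) := by
        fun_prop
      have hfc : Continuous (Function.uncurry fun (z y : ℝ) =>
          d t₀ x₀ y z * v n (η t₀ x₀ y z) z) :=
        (hd.comp hmap).mul ((hvc n).comp ((hEc.comp hmap).prodMk continuous_fst))
      exact intervalIntegral.continuous_parametric_intervalIntegral_of_continuous hfc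
        continuous_id
    have hHc := hHgen t x
    have hH'c := hHgen t' x' 
    have j1 : IntervalIntegrable (fun z => ∫ y in (0:ℝ)..z, d t x y z * v n (η t x y z) z)
        MeasureTheory.volume 0 x' := hHc.intervalIntegrable _ _
    have j2 : IntervalIntegrable (fun z => ∫ y in (0:ℝ)..z, d t x y z * v n (η t x y z) z)
        MeasureTheory.volume x' x := hHc.intervalIntegrable _ _
    have j3 : IntervalIntegrable (fun z => ∫ y in (0:ℝ)..z, d t' x' y z * v n (η t' x' y z) z)
        MeasureTheory.volume 0 x' := hH'c.intervalIntegrable _ _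
    have hdiffeq : (∫ z in (0:ℝ)..x, ∫ y in (0:ℝ)..z, d t x y z * v n (η t x y z) z) -
        (∫ z in (0:ℝ)..x', ∫ y in (0:ℝ)..z, d t' x' y z * v n (η t' x' y z) z) =
        (∫ z in (0:ℝ)..x', ((∫ y in (0:ℝ)..z, d t x y z * v n (η t x y z) z) -
          ∫ y in (0:ℝ)..z, d t' x' y z * v n (η t' x' y z) z)) +
          ∫ z in x'..x, ∫ y in (0:ℝ)..z, d t x y z * v n (η t x y z) z := by
      rw [intervalIntegral.integral_sub j1 j3, ← integral_add_adjacent_intervals j1 j2]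
      ring
    rw [hdiffeq]
    have hP1 : |∫ z in (0:ℝ)..x', ((∫ y in (0:ℝ)..z, d t x y z * v n (η t x y z) z) -
        ∫ y in (0:ℝ)..z, d t' x' y z * v n (η t' x' y z) z)| ≤ ε / 2 := by
      have hb1 : ∀ z ∈ uIoc (0:ℝ) x', ‖(∫ y in (0:ℝ)..z, d t x y z * v n (η t x y z) z) -
          ∫ y in (0:ℝ)..z, d t' x' y z * v n (η t' x' y z) z‖ ≤ ε / 2 := by
        intro z hz
        rw [uIoc_of_le hx'.1] at hz
        have hzI : z ∈ Icc (0:ℝ) 1 := ⟨hz.1.le, hz.2.trans hx'.2⟩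
        rw [Real.norm_eq_abs]
        exact hΔh z hzI
      have h3 := intervalIntegral.norm_integral_le_of_norm_le_const hb1
      rw [Real.norm_eq_abs] at h3
      calc |∫ z in (0:ℝ)..x', ((∫ y in (0:ℝ)..z, d t x y z * v n (η t x y z) z) -
          ∫ y in (0:ℝ)..z, d t' x' y z * v n (η t' x' y z) z)| ≤ ε / 2 * |x' - 0| := h3
        _ ≤ ε / 2 * 1 := by
            refine mul_le_mul_of_nonneg_left ?_ (by linarith)
            rw [sub_zero]
            exact abs_le.mpr ⟨by linarith [hx'.1], hx'.2⟩
        _ = ε / 2 := mul_one _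
    have hP2 : |∫ z in x'..x, ∫ y in (0:ℝ)..z, d t x y z * v n (η t x y z) z| ≤ ε / 4 := by
      have hb1 : ∀ z ∈ uIoc x' x, ‖∫ y in (0:ℝ)..z, d t x y z * v n (η t x y z) z‖ ≤ Cd * M := by
        intro z hz
        have hzI : z ∈ Icc (0:ℝ) 1 := by
          constructor
          · exact le_trans (le_min hx'.1 hx.1) hz.1.le
          · exact le_trans hz.2 (max_le hx'.2 hx.2)
        rw [Real.norm_eq_abs]
        exact hinnerB n t x z ht hx hzI
      have h3 := intervalIntegral.norm_integral_le_of_norm_le_const hb1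
      rw [Real.norm_eq_abs] at h3
      calc |∫ z in x'..x, ∫ y in (0:ℝ)..z, d t x y z * v n (η t x y z) z|
          ≤ Cd * M * |x - x'| := h3
        _ ≤ (Cd * M + 1) * δ₃ := by nlinarith [abs_nonneg (x - x')]
        _ = ε / 4 := by
            have hne : Cd * M + 1 ≠ 0 := by linarith
            rw [hδ₃def]
            field_simp
    calc |(∫ z in (0:ℝ)..x', ((∫ y in (0:ℝ)..z, d t x y z * v n (η t x y z) z) -
          ∫ y in (0:ℝ)..z, d t' x' y z * v n (η t' x' y z) z)) +
          ∫ z in x'..x, ∫ y in (0:ℝ)..z, d t x y z * v n (η t x y z) z|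
        ≤ |∫ z in (0:ℝ)..x', ((∫ y in (0:ℝ)..z, d t x y z * v n (η t x y z) z) -
          ∫ y in (0:ℝ)..z, d t' x' y z * v n (η t' x' y z) z)| +
          |∫ z in x'..x, ∫ y in (0:ℝ)..z, d t x y z * v n (η t x y z) z| := abs_add_le _ _
      _ ≤ ε / 2 + ε / 4 := add_le_add hP1 hP2
      _ ≤ ε := by linarith
  -- Arzelà–Ascoli assembly
  set S : Set (ℝ × ℝ) := Icc (0:ℝ) 1 ×ˢ Icc (0:ℝ) 1 with hSdef
  have hScomp : IsCompact S := isCompact_Icc.prod isCompact_Icc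
  haveI : CompactSpace S := isCompact_iff_compactSpace.mp hScomp
  set Gb : ℕ → BoundedContinuousFunction S ℝ := fun n => BoundedContinuousFunction.mkOfCompact
    ⟨fun k => ∫ z in (0:ℝ)..(k : ℝ × ℝ).2, ∫ y in (0:ℝ)..z,
        d (k : ℝ × ℝ).1 (k : ℝ × ℝ).2 y z * v n (η (k : ℝ × ℝ).1 (k : ℝ × ℝ).2 y z) z,
      ((hgc n).comp continuous_subtype_val)⟩ with hGbdef
  have hGbval : ∀ (n : ℕ) (k : S), Gb n k = ∫ z in (0:ℝ)..(k : ℝ × ℝ).2, ∫ y in (0:ℝ)..z,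
      d (k : ℝ × ℝ).1 (k : ℝ × ℝ).2 y z * v n (η (k : ℝ × ℝ).1 (k : ℝ × ℝ).2 y z) z :=
    fun n k => rfl
  have in_s : ∀ (f : BoundedContinuousFunction S ℝ) (k : S), f ∈ Set.range Gb → f k ∈ Icc (-(Cd * M)) (Cd * M) := by
    rintro f k ⟨n, rfl⟩
    have hk := k.2
    have hb := hgB n (k : ℝ × ℝ).1 (k : ℝ × ℝ).2 hk.1 hk.2
    rw [hGbval, mem_Icc]
    exact ⟨(abs_le.mp hb).1, (abs_le.mp hb).2⟩
  have hEquiCont : Equicontinuous ((↑) : Set.range Gb → S → ℝ) := by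
    intro k₀
    rw [Metric.equicontinuousAt_iff]
    intro ε hε
    obtain ⟨δ, hδ0, hδ⟩ := hequi (ε / 2) (by linarith)
    refine ⟨δ, hδ0, fun k hk i => ?_⟩
    obtain ⟨n, hn⟩ := i.2
    rw [Subtype.dist_eq, Prod.dist_eq] at hk
    have h1 : |(k₀ : ℝ × ℝ).1 - (k : ℝ × ℝ).1| < δ := by
      rw [abs_sub_comm, ← Real.dist_eq]
      exact lt_of_le_of_lt (le_max_left _ _) hk
    have h2 : |(k₀ : ℝ × ℝ).2 - (k : ℝ × ℝ).2| < δ := by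
      rw [abs_sub_comm, ← Real.dist_eq]
      exact lt_of_le_of_lt (le_max_right _ _) hk
    have hk₀m := k₀.2
    have hkm := k.2
    have := hδ n (k₀ : ℝ × ℝ).1 (k₀ : ℝ × ℝ).2 (k : ℝ × ℝ).1 (k : ℝ × ℝ).2
      hk₀m.1 hk₀m.2 hkm.1 hkm.2 h1 h2
    have hcoe : ∀ m : S, (i : S → ℝ) m = Gb n m := fun m => by rw [hn]
    rw [hcoe, hcoe, Real.dist_eq, hGbval, hGbval]
    exact lt_of_le_of_lt this (by linarith)
  have hcl := BoundedContinuousFunction.arzela_ascoli (α := S)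
    (Icc (-(Cd * M)) (Cd * M)) isCompact_Icc (Set.range Gb) in_s hEquiCont
  obtain ⟨W, -, φ, hφmono, hφconv⟩ := hcl.isSeqCompact
    (x := Gb) (fun n => subset_closure ⟨n, rfl⟩)
  have hcauchy : CauchySeq (Gb ∘ φ) := hφconv.cauchySeq
  rw [Metric.cauchySeq_iff] at hcauchy
  -- the clamping map
  set c : ℝ → ℝ := fun x => max 0 (min x 1) with hcdef
  have hcc : Continuous c := continuous_const.max (continuous_id.min continuous_const)
  have hcmem : ∀ x : ℝ, c x ∈ Icc (0:ℝ) 1 := fun x =>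
    ⟨le_max_left _ _, max_le zero_le_one (min_le_right _ _)⟩
  have hceq : ∀ x ∈ Icc (0:ℝ) 1, c x = x := by
    intro x hx
    rw [hcdef]
    simp only []
    rw [min_eq_left hx.2, max_eq_right hx.1]
  -- reduction of the time variable mod 1
  have hgint : ∀ (n : ℕ) (x t : ℝ) (m : ℤ),
      (∫ z in (0:ℝ)..x, ∫ y in (0:ℝ)..z, d (t - m) x y z * v n (η (t - m) x y z) z) =
      ∫ z in (0:ℝ)..x, ∫ y in (0:ℝ)..z, d t x y z * v n (η t x y z) z := by
    intro n x t m
    have hper : Function.Periodic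
        (fun t => ∫ z in (0:ℝ)..x, ∫ y in (0:ℝ)..z, d t x y z * v n (η t x y z) z) 1 :=
      fun s => hgper n s x
    have h := hper.sub_int_mul_eq (x := t) m
    simpa using h
  have hfract : ∀ (n : ℕ) (p : ℝ × ℝ),
      (∫ z in (0:ℝ)..(c p.2), ∫ y in (0:ℝ)..z,
        d (Int.fract p.1) (c p.2) y z * v n (η (Int.fract p.1) (c p.2) y z) z) =
      ∫ z in (0:ℝ)..(c p.2), ∫ y in (0:ℝ)..z, d p.1 (c p.2) y z * v n (η p.1 (c p.2) y z) z := by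
    intro n p
    have hfr : Int.fract p.1 = p.1 - (⌊p.1⌋ : ℝ) := rfl
    rw [hfr]
    exact hgint n (c p.2) p.1 ⌊p.1⌋
  have hfractmem : ∀ r : ℝ, Int.fract r ∈ Icc (0:ℝ) 1 := fun r =>
    ⟨Int.fract_nonneg r, (Int.fract_lt_one r).le⟩
  set κ : ℝ × ℝ → S := fun p => ⟨(Int.fract p.1, c p.2), ⟨hfractmem p.1, hcmem p.2⟩⟩ with hκdef
  set G : ℕ → ℝ × ℝ → ℝ := fun n p => ∫ z in (0:ℝ)..(c p.2), ∫ y in (0:ℝ)..z,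
      d p.1 (c p.2) y z * v n (η p.1 (c p.2) y z) z with hGdef
  have hκ1 : ∀ p : ℝ × ℝ, (κ p : ℝ × ℝ).1 = Int.fract p.1 := fun p => rfl
  have hκ2 : ∀ p : ℝ × ℝ, (κ p : ℝ × ℝ).2 = c p.2 := fun p => rfl
  have hGκ : ∀ n p, G n p = Gb n (κ p) := by
    intro n p
    rw [hGbval n (κ p), hκ1, hκ2, hGdef]
    exact (hfract n p).symm
  have hGc : ∀ n, Continuous (G n) := by
    intro n
    simp only [hGdef]
    have hmap : Continuous fun q : ((ℝ × ℝ) × ℝ) × ℝ =>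
        ((q.1.1.1, c q.1.1.2, q.2, q.1.2) : ℝ × ℝ × ℝ × ℝ) :=
      (continuous_fst.comp (continuous_fst.comp continuous_fst)).prodMk
        ((hcc.comp (continuous_snd.comp (continuous_fst.comp continuous_fst))).prodMk
          (continuous_snd.prodMk (continuous_snd.comp continuous_fst)))
    have hfc2 : Continuous (Function.uncurry fun (q : (ℝ × ℝ) × ℝ) (y : ℝ) =>
        d q.1.1 (c q.1.2) y q.2 * v n (η q.1.1 (c q.1.2) y q.2) q.2) :=
      (hd.comp hmap).mul ((hvc n).comp ((hEc.comp hmap).prodMk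
        (continuous_snd.comp continuous_fst)))
    have hGfc : Continuous (Function.uncurry fun (p : ℝ × ℝ) (z : ℝ) =>
        ∫ y in (0:ℝ)..z, d p.1 (c p.2) y z * v n (η p.1 (c p.2) y z) z) :=
      intervalIntegral.continuous_parametric_intervalIntegral_of_continuous
        (s := fun q : (ℝ × ℝ) × ℝ => q.2) hfc2 continuous_snd
    exact intervalIntegral.continuous_parametric_intervalIntegral_of_continuous hGfc
      (hcc.comp continuous_snd)
  -- uniform Cauchy on all of ℝ²
  have hUC : UniformCauchySeqOn (fun n => G (φ n)) atTop univ := by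
    rw [Metric.uniformCauchySeqOn_iff]
    intro ε hε
    obtain ⟨N, hN⟩ := hcauchy ε hε
    refine ⟨N, fun m hm n' hn' p _ => ?_⟩
    have h1 : dist (G (φ m) p) (G (φ n') p) = dist (Gb (φ m) (κ p)) (Gb (φ n') (κ p)) := by
      rw [hGκ, hGκ]
    rw [h1]
    calc dist (Gb (φ m) (κ p)) (Gb (φ n') (κ p))
        ≤ dist (Gb (φ m)) (Gb (φ n')) := BoundedContinuousFunction.dist_coe_le_dist _
      _ < ε := hN m hm n' hn'
  have hptw : ∀ p : ℝ × ℝ, ∃ l : ℝ, Tendsto (fun n => G (φ n) p) atTop (nhds l) :=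
    fun p => cauchySeq_tendsto_of_complete (hUC.cauchySeq (mem_univ p))
  choose L hL using hptw
  have hTU : TendstoUniformlyOn (fun n => G (φ n)) L atTop univ :=
    hUC.tendstoUniformlyOn_of_tendsto fun p _ => hL p
  have hTUa : TendstoUniformly (fun n => G (φ n)) L atTop := tendstoUniformlyOn_univ.mp hTU
  have hLc : Continuous L := hTUa.continuous (Eventually.of_forall fun n => hGc (φ n)).frequently
  have huncurry : uncurry (fun t x => L (t, x)) = L := funext fun p => by
    simp [Function.uncurry]
  refine ⟨φ, fun t x => L (t, x), hφmono, ?_, ?_, ?_⟩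
  · rw [huncurry]
    exact hLc
  · intro t x
    have h1 : (fun n => G (φ n) (t + 1, x)) = fun n => G (φ n) (t, x) := by
      funext n
      rw [hGdef]
      exact hgper (φ n) t (c x)
    exact tendsto_nhds_unique (h1 ▸ hL (t + 1, x)) (hL (t, x))
  · rw [huncurry]
    have h2 : TendstoUniformlyOn (fun n => G (φ n)) L atTop (univ ×ˢ Icc (0:ℝ) 1) :=
      hTU.mono (subset_univ _)
    refine h2.congr (Eventually.of_forall fun n p hp => ?_)
    have hp2 : p.2 ∈ Icc (0:ℝ) 1 := hp.2
    show G (φ n) p = _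
    rw [hGdef]
    simp only []
    rw [hceq p.2 hp2]
end

section
/- Let a₁ ∈ C([0,1]) be nowhere vanishing, α₁(x,y) = ∫_x^y dz/a₁(z), and let g ∈ C(ℝ×[0,1]) be 1-periodic in t. For any continuous 1-periodic (in t) functions u and v on ℝ×[0,1], define w(t,x) = ∫_0^x (v(t+α₁(x,y),y)/a₁(y)) · exp(∫_y^x g(t+α₁(x,z),z)/a₁(z) dz) dy. If u, v, g are C¹, then w is C¹ and satisfies ∂_t w(t,x) + a₁(x) ∂_x w(t,x) = v(t,x) + g(t,x) w(t,x) and w(t,0) = 0. -/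
open Function intervalIntegral

namespace DRIaux

open MeasureTheory Set Metric ContinuousLinearMap

lemma key {F F' : ℝ → ℝ → ℝ} (hF : Continuous (uncurry F)) (hF' : Continuous (uncurry F'))
    (hd : ∀ s u, HasDerivAt (fun s' => F s' u) (F' s u) s) (s₀ b₀ : ℝ) :
    HasFDerivAt (fun p : ℝ × ℝ => ∫ u in (0:ℝ)..p.2, F p.1 u)
      ((∫ u in (0:ℝ)..b₀, F' s₀ u) • ContinuousLinearMap.fst ℝ ℝ ℝ
        + (F s₀ b₀) • ContinuousLinearMap.snd ℝ ℝ ℝ) (s₀, b₀) := by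
  have hFc : ∀ s, Continuous (F s) := fun s => hF.comp (Continuous.prodMk_right s)
  have hF'c : ∀ s, Continuous (F' s) := fun s => hF'.comp (Continuous.prodMk_right s)
  -- Step A: derivative in the parameter at fixed endpoint b₀
  obtain ⟨C, hC⟩ := (isCompact_Icc.prod isCompact_Icc :
      IsCompact (Icc (s₀ - 1) (s₀ + 1) ×ˢ Icc (min 0 b₀) (max 0 b₀))).exists_bound_of_continuousOn
      hF'.continuousOn
  have hφ : HasDerivAt (fun s => ∫ u in (0:ℝ)..b₀, F s u)
      (∫ u in (0:ℝ)..b₀, F' s₀ u) s₀ := by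
    refine (intervalIntegral.hasDerivAt_integral_of_dominated_loc_of_deriv_le
      (bound := fun _ => C) (Metric.ball_mem_nhds s₀ one_pos)
      (Filter.Eventually.of_forall fun s => ((hFc s).aestronglyMeasurable).restrict)
      ((hFc s₀).intervalIntegrable _ _)
      ((hF'c s₀).aestronglyMeasurable).restrict
      ?_ (intervalIntegrable_const) ?_).2
    · refine Filter.Eventually.of_forall fun u hu s hs => ?_
      have hu' : u ∈ Icc (min 0 b₀) (max 0 b₀) := uIoc_subset_uIcc hu
      have hs' : s ∈ Icc (s₀ - 1) (s₀ + 1) := by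
        rw [Real.ball_eq_Ioo] at hs
        exact ⟨hs.1.le, hs.2.le⟩
      exact hC (s, u) ⟨hs', hu'⟩
    · exact Filter.Eventually.of_forall fun u _ s _ => hd s u
  have hφ' : HasFDerivAt (fun p : ℝ × ℝ => ∫ u in (0:ℝ)..b₀, F p.1 u)
      ((∫ u in (0:ℝ)..b₀, F' s₀ u) • ContinuousLinearMap.fst ℝ ℝ ℝ) (s₀, b₀) := by
    have := hφ.hasFDerivAt.comp (s₀, b₀) (hasFDerivAt_fst : HasFDerivAt (@Prod.fst ℝ ℝ) (ContinuousLinearMap.fst ℝ ℝ ℝ) (s₀, b₀))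
    refine this.congr_fderiv ?_
    ext x <;> simp [mul_comm]
  -- Step B: derivative of the moving-endpoint part
  have hψ : HasFDerivAt (fun p : ℝ × ℝ => ∫ u in b₀..p.2, F p.1 u)
      ((F s₀ b₀) • ContinuousLinearMap.snd ℝ ℝ ℝ) (s₀, b₀) := by
    rw [hasFDerivAt_iff_isLittleO_nhds_zero, Asymptotics.isLittleO_iff]
    intro c hc
    obtain ⟨δ, hδ, hδc⟩ := Metric.continuousAt_iff.1 hF.continuousAt c hc
    filter_upwards [Metric.ball_mem_nhds (0 : ℝ × ℝ) hδ] with q hq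
    have h1 : (∫ u in b₀..((s₀, b₀) + q).2, F ((s₀, b₀) + q).1 u)
        - (∫ u in b₀..b₀, F s₀ u)
        - ((F s₀ b₀) • ContinuousLinearMap.snd ℝ ℝ ℝ) q
        = ∫ u in b₀..(b₀ + q.2), (F (s₀ + q.1) u - F s₀ b₀) := by
      rw [intervalIntegral.integral_sub ((hFc (s₀ + q.1)).intervalIntegrable _ _)
        (intervalIntegrable_const)]
      simp [smul_eq_mul, mul_comm]
    rw [h1]
    have hqd : dist q 0 < δ := by simpa [Metric.mem_ball] using hq
    have h2 : ∀ u ∈ Set.uIoc b₀ (b₀ + q.2), ‖F (s₀ + q.1) u - F s₀ b₀‖ ≤ c := by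
      intro u hu
      have hub : |u - b₀| ≤ |q.2| := by
        rcases le_or_gt b₀ (b₀ + q.2) with h | h
        · rw [uIoc_of_le h] at hu
          rw [abs_of_nonneg (by linarith [hu.1.le])]
          calc u - b₀ ≤ q.2 := by linarith [hu.2]
            _ ≤ |q.2| := le_abs_self _
        · rw [uIoc_of_ge h.le] at hu
          rw [abs_of_nonpos (by linarith [hu.2])]
          calc -(u - b₀) ≤ -q.2 := by linarith [hu.1.le]
            _ ≤ |q.2| := neg_le_abs _
      have hd2 : dist ((s₀ + q.1, u)) ((s₀, b₀)) < δ := by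
        rw [Prod.dist_eq]
        refine lt_of_le_of_lt (max_le ?_ ?_) hqd
        · show dist (s₀ + q.1) s₀ ≤ dist q 0
          have h3 : dist (s₀ + q.1) s₀ = |q.1| := by rw [Real.dist_eq]; ring_nf
          rw [h3, Prod.dist_eq]
          refine le_trans ?_ (le_max_left _ _)
          rw [Real.dist_eq]
          simp
        · show dist u b₀ ≤ dist q 0
          rw [Real.dist_eq, Prod.dist_eq]
          refine hub.trans (le_trans ?_ (le_max_right _ _))
          rw [Real.dist_eq]
          simp
      have := hδc hd2
      rw [Real.dist_eq] at this
      exact this.le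
    calc ‖∫ u in b₀..(b₀ + q.2), (F (s₀ + q.1) u - F s₀ b₀)‖
        ≤ c * |(b₀ + q.2) - b₀| := intervalIntegral.norm_integral_le_of_norm_le_const h2
      _ ≤ c * ‖q‖ := by
          refine mul_le_mul_of_nonneg_left ?_ hc.le
          calc |(b₀ + q.2) - b₀| = ‖q.2‖ := by rw [Real.norm_eq_abs]; ring_nf
            _ ≤ ‖q‖ := norm_snd_le _
  -- combine
  have heq : (fun p : ℝ × ℝ => ∫ u in (0:ℝ)..p.2, F p.1 u)
      = fun p : ℝ × ℝ => (∫ u in (0:ℝ)..b₀, F p.1 u) + ∫ u in b₀..p.2, F p.1 u := by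
    funext p
    rw [intervalIntegral.integral_add_adjacent_intervals ((hFc p.1).intervalIntegrable _ _)
      ((hFc p.1).intervalIntegrable _ _)]
  rw [heq]
  exact hφ'.add hψ

lemma keyC1 {F F' : ℝ → ℝ → ℝ} (hF : Continuous (uncurry F)) (hF' : Continuous (uncurry F'))
    (hd : ∀ s u, HasDerivAt (fun s' => F s' u) (F' s u) s) :
    ContDiff ℝ 1 (fun p : ℝ × ℝ => ∫ u in (0:ℝ)..p.2, F p.1 u) := by
  rw [contDiff_one_iff_fderiv]
  refine ⟨fun p => (key hF hF' hd p.1 p.2).differentiableAt, ?_⟩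
  have hfd : (fderiv ℝ (fun p : ℝ × ℝ => ∫ u in (0:ℝ)..p.2, F p.1 u))
      = fun p : ℝ × ℝ => (∫ u in (0:ℝ)..p.2, F' p.1 u) • ContinuousLinearMap.fst ℝ ℝ ℝ
        + (F p.1 p.2) • ContinuousLinearMap.snd ℝ ℝ ℝ := by
    funext p
    exact (key hF hF' hd p.1 p.2).fderiv
  rw [hfd]
  exact ((intervalIntegral.continuous_parametric_primitive_of_continuous hF').smul
    continuous_const).add (hF.smul continuous_const)

end DRIaux

/-- The integral operator along characteristics is a right inverse of the transport
operator `∂ₜ + a₁∂ₓ − g`: with `α₁(x,y) = ∫ₓ^y dz/a₁(z)` and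
`w(t,x) = ∫₀ˣ (v(t+α₁(x,y),y)/a₁(y)) exp(∫_y^x g(t+α₁(x,z),z)/a₁(z) dz) dy`,
if `v, g` are `C¹` and `1`-periodic in `t`, then `w` is `C¹`,
`∂ₜw + a₁(x)∂ₓw = v + g·w`, and `w(t,0) = 0`. -/
theorem D_right_inverse_transport
    (a1 : ℝ → ℝ) (ha : Continuous a1) (ha0 : ∀ x, a1 x ≠ 0)
    (g v : ℝ → ℝ → ℝ)
    (hg : ContDiff ℝ 1 (uncurry g)) (hgper : ∀ t x, g (t + 1) x = g t x)
    (hv : ContDiff ℝ 1 (uncurry v)) (hvper : ∀ t x, v (t + 1) x = v t x)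
    (w : ℝ → ℝ → ℝ)
    (hw : ∀ t x, w t x =
      ∫ y in (0:ℝ)..x, (v (t + ∫ z in x..y, (a1 z)⁻¹) y / a1 y) *
        Real.exp (∫ z in y..x, g (t + ∫ z' in x..z, (a1 z')⁻¹) z / a1 z)) :
    ContDiff ℝ 1 (uncurry w) ∧
    (∀ t x, deriv (fun s => w s x) t + a1 x * deriv (fun y => w t y) x
      = v t x + g t x * w t x) ∧
    (∀ t, w t 0 = 0) := by
  have hinv : Continuous fun z => (a1 z)⁻¹ := ha.inv₀ ha0
  set A : ℝ → ℝ := fun x => ∫ z in (0:ℝ)..x, (a1 z)⁻¹ with hA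
  have hA_d : ∀ x, HasDerivAt A (a1 x)⁻¹ x := fun x =>
    intervalIntegral.integral_hasDerivAt_right (hinv.intervalIntegrable _ _)
      (hinv.stronglyMeasurable.stronglyMeasurableAtFilter) hinv.continuousAt
  have hA_c : Continuous A := by
    rw [continuous_iff_continuousAt]; exact fun x => (hA_d x).continuousAt
  have hA_c1 : ContDiff ℝ 1 A := by
    rw [contDiff_one_iff_deriv]
    refine ⟨fun x => (hA_d x).differentiableAt, ?_⟩
    have : deriv A = fun x => (a1 x)⁻¹ := funext fun x => (hA_d x).deriv
    rw [this]; exact hinv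
  -- partial derivatives of g and v in the first variable
  set gt : ℝ → ℝ → ℝ := fun t x => fderiv ℝ (uncurry g) (t, x) ((1:ℝ), (0:ℝ)) with hgt
  set vt : ℝ → ℝ → ℝ := fun t x => fderiv ℝ (uncurry v) (t, x) ((1:ℝ), (0:ℝ)) with hvt
  have hgt_d : ∀ t x, HasDerivAt (fun t' => g t' x) (gt t x) t := by
    intro t x
    have h1 : HasDerivAt (fun t' => ((t' : ℝ), x)) ((1 : ℝ), (0 : ℝ)) t :=
      (hasDerivAt_id t).prodMk (hasDerivAt_const t x)
    exact ((hg.differentiable one_ne_zero) (t, x)).hasFDerivAt.comp_hasDerivAt t h1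
  have hvt_d : ∀ t x, HasDerivAt (fun t' => v t' x) (vt t x) t := by
    intro t x
    have h1 : HasDerivAt (fun t' => ((t' : ℝ), x)) ((1 : ℝ), (0 : ℝ)) t :=
      (hasDerivAt_id t).prodMk (hasDerivAt_const t x)
    exact ((hv.differentiable one_ne_zero) (t, x)).hasFDerivAt.comp_hasDerivAt t h1
  have hgt_c : Continuous (uncurry gt) := by
    rw [hgt]; simp only [Function.uncurry_def]
    exact (hg.continuous_fderiv one_ne_zero).clm_apply continuous_const
  have hvt_c : Continuous (uncurry vt) := by
    rw [hvt]; simp only [Function.uncurry_def]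
    exact (hv.continuous_fderiv one_ne_zero).clm_apply continuous_const
  -- the function k and its t-derivative
  set k : ℝ → ℝ → ℝ := fun s z => g (s + A z) z / a1 z with hk
  set k' : ℝ → ℝ → ℝ := fun s z => gt (s + A z) z / a1 z with hk'
  have hmap : Continuous fun p : ℝ × ℝ => ((p.1 + A p.2 : ℝ), p.2) :=
    (continuous_fst.add (hA_c.comp continuous_snd)).prodMk continuous_snd
  have hk_c : Continuous (uncurry k) := by
    rw [hk]; simp only [Function.uncurry_def]
    exact (hg.continuous.comp hmap).div (ha.comp continuous_snd) fun p => ha0 p.2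
  have hk'_c : Continuous (uncurry k') := by
    rw [hk']; simp only [Function.uncurry_def]
    exact (hgt_c.comp hmap).div (ha.comp continuous_snd) fun p => ha0 p.2
  have hk_d : ∀ s z, HasDerivAt (fun s' => k s' z) (k' s z) s := by
    intro s z
    rw [hk, hk']
    have h0 : HasDerivAt (fun s' : ℝ => s' + A z) 1 s := (hasDerivAt_id s).add_const (A z)
    have h1 := HasDerivAt.comp s (hgt_d (s + A z) z) h0
    simpa using h1.div_const (a1 z)
  set G : ℝ × ℝ → ℝ := fun p => ∫ z in (0:ℝ)..p.2, k p.1 z with hG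
  set Gs : ℝ × ℝ → ℝ := fun p => ∫ z in (0:ℝ)..p.2, k' p.1 z with hGs
  have hG_fd : ∀ p : ℝ × ℝ, HasFDerivAt G
      (Gs p • ContinuousLinearMap.fst ℝ ℝ ℝ + k p.1 p.2 • ContinuousLinearMap.snd ℝ ℝ ℝ) p :=
    fun p => DRIaux.key hk_c hk'_c hk_d p.1 p.2
  have hG_c1 : ContDiff ℝ 1 G := DRIaux.keyC1 hk_c hk'_c hk_d
  have hG_c : Continuous G := hG_c1.continuous
  have hGs_c : Continuous Gs :=
    intervalIntegral.continuous_parametric_primitive_of_continuous hk'_c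
  have hGs_d : ∀ s y, HasDerivAt (fun s' => G (s', y)) (Gs (s, y)) s := by
    intro s y
    have h1 : HasDerivAt (fun s' => ((s' : ℝ), y)) ((1 : ℝ), (0 : ℝ)) s :=
      (hasDerivAt_id s).prodMk (hasDerivAt_const s y)
    have h2 := (hG_fd (s, y)).comp_hasDerivAt s h1
    simpa [Function.comp_def] using h2
  -- the function m and its t-derivative
  set m : ℝ → ℝ → ℝ := fun s y => v (s + A y) y / a1 y * Real.exp (-G (s, y)) with hm
  set m' : ℝ → ℝ → ℝ := fun s y => vt (s + A y) y / a1 y * Real.exp (-G (s, y))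
    + v (s + A y) y / a1 y * (Real.exp (-G (s, y)) * -Gs (s, y)) with hm'
  have hm_c : Continuous (uncurry m) := by
    rw [hm]; simp only [Function.uncurry_def]
    exact ((hv.continuous.comp hmap).div (ha.comp continuous_snd) fun p => ha0 p.2).mul
      (Real.continuous_exp.comp hG_c.neg)
  have hm'_c : Continuous (uncurry m') := by
    rw [hm']; simp only [Function.uncurry_def]
    exact (((hvt_c.comp hmap).div (ha.comp continuous_snd) fun p => ha0 p.2).mul
      (Real.continuous_exp.comp hG_c.neg)).add
      (((hv.continuous.comp hmap).div (ha.comp continuous_snd) fun p => ha0 p.2).mul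
        ((Real.continuous_exp.comp hG_c.neg).mul hGs_c.neg))
  have hm_d : ∀ s y, HasDerivAt (fun s' => m s' y) (m' s y) s := by
    intro s y
    rw [hm, hm']
    have h0 : HasDerivAt (fun s' : ℝ => s' + A y) 1 s := (hasDerivAt_id s).add_const (A y)
    have h1 : HasDerivAt (fun s' => v (s' + A y) y / a1 y) (vt (s + A y) y / a1 y) s := by
      have := HasDerivAt.comp s (hvt_d (s + A y) y) h0
      simpa using this.div_const (a1 y)
    have h2 : HasDerivAt (fun s' => Real.exp (-G (s', y)))
        (Real.exp (-G (s, y)) * -Gs (s, y)) s := (hGs_d s y).neg.exp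
    exact h1.mul h2
  set I : ℝ × ℝ → ℝ := fun p => ∫ y in (0:ℝ)..p.2, m p.1 y with hI
  set Is : ℝ × ℝ → ℝ := fun p => ∫ y in (0:ℝ)..p.2, m' p.1 y with hIs
  have hI_fd : ∀ p : ℝ × ℝ, HasFDerivAt I
      (Is p • ContinuousLinearMap.fst ℝ ℝ ℝ + m p.1 p.2 • ContinuousLinearMap.snd ℝ ℝ ℝ) p :=
    fun p => DRIaux.key hm_c hm'_c hm_d p.1 p.2
  have hI_c1 : ContDiff ℝ 1 I := DRIaux.keyC1 hm_c hm'_c hm_d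
  set W : ℝ × ℝ → ℝ := fun p => Real.exp (G p) * I p with hW
  have hW_c1 : ContDiff ℝ 1 W := hG_c1.exp.mul hI_c1
  have hW_fd : ∀ p : ℝ × ℝ, HasFDerivAt W
      (Real.exp (G p) •
          (Is p • ContinuousLinearMap.fst ℝ ℝ ℝ + m p.1 p.2 • ContinuousLinearMap.snd ℝ ℝ ℝ)
        + I p • (Real.exp (G p) •
          (Gs p • ContinuousLinearMap.fst ℝ ℝ ℝ + k p.1 p.2 • ContinuousLinearMap.snd ℝ ℝ ℝ))) p :=
    fun p => ((hG_fd p).exp).mul (hI_fd p)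
  -- w in terms of W
  have hAint : ∀ x y : ℝ, (∫ z in x..y, (a1 z)⁻¹) = A y - A x := by
    intro x y
    rw [hA, eq_sub_iff_add_eq, add_comm]
    exact intervalIntegral.integral_add_adjacent_intervals (hinv.intervalIntegrable _ _)
      (hinv.intervalIntegrable _ _)
  have hwW : ∀ t x, w t x = W (t - A x, x) := by
    intro t x
    rw [hw]
    have hptw : ∀ y, (v (t + ∫ z in x..y, (a1 z)⁻¹) y / a1 y) *
        Real.exp (∫ z in y..x, g (t + ∫ z' in x..z, (a1 z')⁻¹) z / a1 z)
        = Real.exp (G (t - A x, x)) * m (t - A x) y := by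
      intro y
      have e1 : t + (∫ z in x..y, (a1 z)⁻¹) = (t - A x) + A y := by rw [hAint]; ring
      have e2 : (∫ z in y..x, g (t + ∫ z' in x..z, (a1 z')⁻¹) z / a1 z)
          = G (t - A x, x) - G (t - A x, y) := by
        have e3 : ∀ z, g (t + ∫ z' in x..z, (a1 z')⁻¹) z / a1 z = k (t - A x) z := by
          intro z
          rw [hk]
          have e4 : t + (∫ z' in x..z, (a1 z')⁻¹) = (t - A x) + A z := by rw [hAint]; ring
          simp only [e4]
        rw [intervalIntegral.integral_congr (g := fun z => k (t - A x) z) fun z _ => e3 z, hG,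
          eq_sub_iff_add_eq, add_comm]
        exact intervalIntegral.integral_add_adjacent_intervals
          ((hk_c.comp (Continuous.prodMk_right (t - A x))).intervalIntegrable _ _)
          ((hk_c.comp (Continuous.prodMk_right (t - A x))).intervalIntegrable _ _)
      rw [e1, e2]
      simp only [hm, Real.exp_sub, Real.exp_neg]
      ring
    rw [intervalIntegral.integral_congr
        (g := fun y => Real.exp (G (t - A x, x)) * m (t - A x) y) fun y _ => hptw y,
      intervalIntegral.integral_const_mul]
  refine ⟨?_, ?_, fun t => by rw [hw]; simp⟩
  · have huw : uncurry w = W ∘ fun p : ℝ × ℝ => ((p.1 - A p.2 : ℝ), p.2) :=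
      funext fun p => hwW p.1 p.2
    rw [huw]
    exact hW_c1.comp ((contDiff_fst.sub (hA_c1.comp contDiff_snd)).prodMk contDiff_snd)
  · intro t x
    have hfun1 : (fun s => w s x) = fun s => W (s - A x, x) := funext fun s => hwW s x
    have hfun2 : (fun y => w t y) = fun y => W (t - A y, y) := funext fun y => hwW t y
    have hline1 : HasDerivAt (fun t' : ℝ => ((t' - A x : ℝ), (x : ℝ))) ((1 : ℝ), (0 : ℝ)) t :=
      ((hasDerivAt_id t).sub_const (A x)).prodMk (hasDerivAt_const t x)
    have hline2 : HasDerivAt (fun y : ℝ => ((t - A y : ℝ), (y : ℝ)))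
        ((-(a1 x)⁻¹ : ℝ), (1 : ℝ)) x := by
      have h1 : HasDerivAt (fun y : ℝ => t - A y) (-(a1 x)⁻¹) x := by
        simpa using (hA_d x).const_sub t
      exact h1.prodMk (hasDerivAt_id x)
    have hwt := HasFDerivAt.comp_hasDerivAt
      (f := fun t' : ℝ => ((t' - A x : ℝ), (x : ℝ))) t (hW_fd (t - A x, x)) hline1
    have hwx := HasFDerivAt.comp_hasDerivAt
      (f := fun y : ℝ => ((t - A y : ℝ), (y : ℝ))) x (hW_fd (t - A x, x)) hline2
    have hwt' : HasDerivAt (fun s => W (s - A x, x))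
        ((Real.exp (G (t - A x, x)) •
            (Is (t - A x, x) • ContinuousLinearMap.fst ℝ ℝ ℝ
              + m (t - A x) x • ContinuousLinearMap.snd ℝ ℝ ℝ)
          + I (t - A x, x) • (Real.exp (G (t - A x, x)) •
            (Gs (t - A x, x) • ContinuousLinearMap.fst ℝ ℝ ℝ
              + k (t - A x) x • ContinuousLinearMap.snd ℝ ℝ ℝ))) ((1 : ℝ), (0 : ℝ))) t := hwt
    have hwx' : HasDerivAt (fun y => W (t - A y, y))
        ((Real.exp (G (t - A x, x)) •
            (Is (t - A x, x) • ContinuousLinearMap.fst ℝ ℝ ℝ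
              + m (t - A x) x • ContinuousLinearMap.snd ℝ ℝ ℝ)
          + I (t - A x, x) • (Real.exp (G (t - A x, x)) •
            (Gs (t - A x, x) • ContinuousLinearMap.fst ℝ ℝ ℝ
              + k (t - A x) x • ContinuousLinearMap.snd ℝ ℝ ℝ))) ((-(a1 x)⁻¹ : ℝ), (1 : ℝ))) x := hwx
    rw [hfun1, hfun2, hwt'.deriv, hwx'.deriv, hwW t x]
    simp only [ContinuousLinearMap.add_apply, ContinuousLinearMap.coe_smul', Pi.smul_apply,
      ContinuousLinearMap.coe_fst', ContinuousLinearMap.coe_snd', smul_eq_mul]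
    rw [hW, hk, hm]
    simp only
    rw [show t - A x + A x = t from by ring, Real.exp_neg]
    have hE := Real.exp_ne_zero (G (t - A x, x))
    have ha' := ha0 x
    field_simp
    ring
end
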